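/- arXiv:1905.04712 — 3 statements merged into one kernel-verified Lean document; each statement's English description precedes it below -/
import Mathlib

section
/- Let M₀, M₁, N₀, N₁ be finite-dimensional complex vector spaces, f : M₀ → M₁, g : M₁ → M₀ with g ∘ f = 0 and f ∘ g = 0, and f' : N₀ → N₁, g' : N₁ → N₀ with g' ∘ f' = 0 and f' ∘ g' = 0. Define F : (M₀ ⊗ N₀) ⊕ (M₁ ⊗ N₁) → (M₀ ⊗ N₁) ⊕ (M₁ ⊗ N₀) by F(m₀ ⊗ n₀) = f(m₀) ⊗ n₀ + m₀ ⊗ f'(n₀) and F(m₁ ⊗ n₁) = g(m₁) ⊗ n₁ − m₁ ⊗ g'(n₁), and G : (M₀ ⊗ N₁) ⊕ (M₁ ⊗ N₀) → (M₀ ⊗ N₀) ⊕ (M₁ ⊗ N₁) by G(m₀ ⊗ n₁) = f(m₀) ⊗ n₁ + m₀ ⊗ g'(n₁) and G(m₁ ⊗ n₀) = g(m₁) ⊗ n₀ − m₁ ⊗ f'(n₀) (the super-Leibniz action of the odd operator x on the tensor product). Then G ∘ F = 0, F ∘ G = 0, and, writing h₀(M) = finrank(ker f) − finrank(range g), h₁(M)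 = finrank(ker g) − finrank(range f) and similarly for N, one has finrank(ker F) − finrank(range G) = h₀(M)h₀(N) + h₁(M)h₁(N) and finrank(ker G) − finrank(range F) = h₀(M)h₁(N) + h₁(M)h₀(N); that is, DS_x(M ⊗ N) ≅ DS_x(M) ⊗ DS_x(N) as super vector spaces. -/
open Module TensorProduct LinearMap

namespace DSaux


variable {M₀ M₁ N₀ N₁ : Type*}
  [AddCommGroup M₀] [Module ℂ M₀] [AddCommGroup M₁] [Module ℂ M₁]
  [AddCommGroup N₀] [Module ℂ N₀] [AddCommGroup N₁] [Module ℂ N₁]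

/-- The canonical super-Leibniz differential (even-to-odd part). -/
noncomputable def DSmap (f : M₀ →ₗ[ℂ] M₁) (g : M₁ →ₗ[ℂ] M₀)
    (f' : N₀ →ₗ[ℂ] N₁) (g' : N₁ →ₗ[ℂ] N₀) :
    (M₀ ⊗[ℂ] N₀) × (M₁ ⊗[ℂ] N₁) →ₗ[ℂ] (M₀ ⊗[ℂ] N₁) × (M₁ ⊗[ℂ] N₀) :=
  LinearMap.prod
    ((lTensor M₀ f') ∘ₗ LinearMap.fst ℂ _ _ + (rTensor N₁ g) ∘ₗ LinearMap.snd ℂ _ _)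
    ((rTensor N₀ f) ∘ₗ LinearMap.fst ℂ _ _ - (lTensor M₁ g') ∘ₗ LinearMap.snd ℂ _ _)

lemma DSmap_apply (f : M₀ →ₗ[ℂ] M₁) (g : M₁ →ₗ[ℂ] M₀)
    (f' : N₀ →ₗ[ℂ] N₁) (g' : N₁ →ₗ[ℂ] N₀) (a : M₀ ⊗[ℂ] N₀) (b : M₁ ⊗[ℂ] N₁) :
    DSmap f g f' g' (a, b)
      = (lTensor M₀ f' a + rTensor N₁ g b, rTensor N₀ f a - lTensor M₁ g' b) := rfl

lemma eq_DSmap (f : M₀ →ₗ[ℂ] M₁) (g : M₁ →ₗ[ℂ] M₀)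
    (f' : N₀ →ₗ[ℂ] N₁) (g' : N₁ →ₗ[ℂ] N₀)
    (F : (M₀ ⊗[ℂ] N₀) × (M₁ ⊗[ℂ] N₁) →ₗ[ℂ] (M₀ ⊗[ℂ] N₁) × (M₁ ⊗[ℂ] N₀))
    (hF₀ : ∀ (m : M₀) (v : N₀), F (m ⊗ₜ v, 0) = (m ⊗ₜ f' v, f m ⊗ₜ v))
    (hF₁ : ∀ (m : M₁) (v : N₁), F (0, m ⊗ₜ v) = (g m ⊗ₜ v, -(m ⊗ₜ g' v))) :
    F = DSmap f g f' g' := by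
  have key0 : ∀ a : M₀ ⊗[ℂ] N₀, F (a, 0) = DSmap f g f' g' (a, 0) := by
    intro a
    induction a using TensorProduct.induction_on with
    | zero => rw [show ((0, 0) : (M₀ ⊗[ℂ] N₀) × (M₁ ⊗[ℂ] N₁)) = 0 from rfl, map_zero, map_zero]
    | tmul m v => rw [hF₀]; simp [DSmap_apply]
    | add x y hx hy =>
        have h2 : ((x + y, 0) : (M₀ ⊗[ℂ] N₀) × (M₁ ⊗[ℂ] N₁)) = (x, 0) + (y, 0) := by simp
        rw [h2, map_add, map_add, hx, hy]
  have key1 : ∀ b : M₁ ⊗[ℂ] N₁, F (0, b) = DSmap f g f' g' (0, b) := by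
    intro b
    induction b using TensorProduct.induction_on with
    | zero => rw [show ((0, 0) : (M₀ ⊗[ℂ] N₀) × (M₁ ⊗[ℂ] N₁)) = 0 from rfl, map_zero, map_zero]
    | tmul m v => rw [hF₁]; simp [DSmap_apply]
    | add x y hx hy =>
        have h2 : ((0, x + y) : (M₀ ⊗[ℂ] N₀) × (M₁ ⊗[ℂ] N₁)) = (0, x) + (0, y) := by simp
        rw [h2, map_add, map_add, hx, hy]
  apply LinearMap.ext
  rintro ⟨a, b⟩
  have h : ((a, b) : (M₀ ⊗[ℂ] N₀) × (M₁ ⊗[ℂ] N₁)) = (a, 0) + (0, b) := by simp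
  rw [h, map_add, map_add, key0, key1]

lemma comp_DSmap_zero (f : M₀ →ₗ[ℂ] M₁) (g : M₁ →ₗ[ℂ] M₀)
    (f' : N₀ →ₗ[ℂ] N₁) (g' : N₁ →ₗ[ℂ] N₀)
    (hgf : g ∘ₗ f = 0) (hfg : f ∘ₗ g = 0)
    (hg'f' : g' ∘ₗ f' = 0) (hf'g' : f' ∘ₗ g' = 0) :
    DSmap f g g' f' ∘ₗ DSmap f g f' g' = 0 := by
  apply LinearMap.ext
  rintro ⟨a, b⟩
  rw [comp_apply, DSmap_apply, DSmap_apply]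
  have e1 : lTensor M₀ g' (lTensor M₀ f' a) = 0 := by
    rw [← comp_apply, ← lTensor_comp, hg'f', lTensor_zero, LinearMap.zero_apply]
  have e2 : lTensor M₀ g' (rTensor N₁ g b) = map g g' b := by
    rw [← comp_apply, lTensor_comp_rTensor]
  have e3 : rTensor N₀ g (rTensor N₀ f a) = 0 := by
    rw [← comp_apply, ← rTensor_comp, hgf, rTensor_zero, LinearMap.zero_apply]
  have e4 : rTensor N₀ g (lTensor M₁ g' b) = map g g' b := by
    rw [← comp_apply, rTensor_comp_lTensor]
  have e5 : rTensor N₁ f (lTensor M₀ f' a) = map f f' a := by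
    rw [← comp_apply, rTensor_comp_lTensor]
  have e6 : rTensor N₁ f (rTensor N₁ g b) = 0 := by
    rw [← comp_apply, ← rTensor_comp, hfg, rTensor_zero, LinearMap.zero_apply]
  have e7 : lTensor M₁ f' (rTensor N₀ f a) = map f f' a := by
    rw [← comp_apply, lTensor_comp_rTensor]
  have e8 : lTensor M₁ f' (lTensor M₁ g' b) = 0 := by
    rw [← comp_apply, ← lTensor_comp, hf'g', lTensor_zero, LinearMap.zero_apply]
  simp only [map_add, map_sub, e1, e2, e3, e4, e5, e6, e7, e8]
  simp [Prod.ext_iff]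



section helpers

variable {V W Z V' W' : Type*}
  [AddCommGroup V] [Module ℂ V] [AddCommGroup W] [Module ℂ W]
  [AddCommGroup Z] [Module ℂ Z] [AddCommGroup V'] [Module ℂ V']
  [AddCommGroup W'] [Module ℂ W']

lemma rank_split [FiniteDimensional ℂ W] (φ : V →ₗ[ℂ] W) (ψ : W →ₗ[ℂ] Z) :
    finrank ℂ (range φ) =
      finrank ℂ (range (ψ ∘ₗ φ)) + finrank ℂ ((range φ) ⊓ ker ψ : Submodule ℂ W) := by
  have h := LinearMap.finrank_range_add_finrank_ker (ψ ∘ₗ (range φ).subtype)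
  rw [range_comp, Submodule.range_subtype, ker_comp] at h
  have h2 : finrank ℂ (Submodule.comap (range φ).subtype (ker ψ))
      = finrank ℂ ((range φ) ⊓ ker ψ : Submodule ℂ W) := by
    rw [← Submodule.map_comap_subtype]
    exact (Submodule.equivMapOfInjective _ (Submodule.injective_subtype _) _).finrank_eq
  rw [h2] at h
  rw [range_comp]
  omega

lemma range_prodMapL (A : V →ₗ[ℂ] W) (B : V' →ₗ[ℂ] W') :
    range (prodMap A B) = (range A).prod (range B) := by
  ext ⟨x, y⟩
  simp only [mem_range, Submodule.mem_prod, prodMap_apply, Prod.ext_iff]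
  constructor
  · rintro ⟨⟨v, v'⟩, h1, h2⟩
    exact ⟨⟨v, h1⟩, ⟨v', h2⟩⟩
  · rintro ⟨⟨v, hv⟩, ⟨v', hv'⟩⟩
    exact ⟨(v, v'), hv, hv'⟩

lemma finrank_prod_sub [FiniteDimensional ℂ V] [FiniteDimensional ℂ W]
    (p : Submodule ℂ V) (q : Submodule ℂ W) :
    finrank ℂ (p.prod q) = finrank ℂ p + finrank ℂ q := by
  have h : p.prod q = range (prodMap p.subtype q.subtype) := by
    rw [range_prodMapL, Submodule.range_subtype, Submodule.range_subtype]
  have hinj : Function.Injective (prodMap p.subtype q.subtype) := by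
    rintro ⟨x1, x2⟩ ⟨y1, y2⟩ hxy
    obtain ⟨h1, h2⟩ := Prod.ext_iff.mp hxy
    exact Prod.ext (Subtype.ext h1) (Subtype.ext h2)
  rw [h, LinearMap.finrank_range_of_inj hinj, Module.finrank_prod]

end helpers

section tensorHelpers

variable {M₀ M₁ N₀ : Type*}
  [AddCommGroup M₀] [Module ℂ M₀] [AddCommGroup M₁] [Module ℂ M₁]
  [AddCommGroup N₀] [Module ℂ N₀]

lemma map_mkQ_factor (f : M₀ →ₗ[ℂ] M₁) (p : Submodule ℂ N₀) :
    map f p.mkQ = (rTensor (N₀ ⧸ p) (range f).subtype) ∘ₗ (map f.rangeRestrict p.mkQ) := by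
  apply TensorProduct.ext'
  intro m v
  simp [rTensor_tmul]

lemma finrank_range_map_mkQ [FiniteDimensional ℂ M₀] [FiniteDimensional ℂ M₁]
    [FiniteDimensional ℂ N₀] (f : M₀ →ₗ[ℂ] M₁) (p : Submodule ℂ N₀) :
    finrank ℂ (range (map f p.mkQ)) = finrank ℂ (range f) * finrank ℂ (N₀ ⧸ p) := by
  rw [map_mkQ_factor, range_comp,
    range_eq_top.mpr (TensorProduct.map_surjective f.surjective_rangeRestrict p.mkQ_surjective),
    Submodule.map_top,
    LinearMap.finrank_range_of_inj
      (Module.Flat.rTensor_preserves_injective_linearMap _ (Submodule.injective_subtype _)),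
    Module.finrank_tensorProduct]

lemma ker_map_mkQ (f : M₀ →ₗ[ℂ] M₁) (p : Submodule ℂ N₀) :
    ker (map f p.mkQ)
      = range (lTensor M₀ p.subtype) ⊔ range (rTensor N₀ (ker f).subtype) := by
  rw [map_mkQ_factor, ker_comp_of_ker_eq_bot _ (ker_eq_bot.mpr
      (Module.Flat.rTensor_preserves_injective_linearMap _ (Submodule.injective_subtype _)))]
  have hex : Function.Exact (ker f).subtype f.rangeRestrict := by
    rw [LinearMap.exact_iff, ker_rangeRestrict, Submodule.range_subtype]
  exact TensorProduct.map_ker hex f.surjective_rangeRestrict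
    (LinearMap.exact_subtype_mkQ p) p.mkQ_surjective

end tensorHelpers

set_option maxHeartbeats 2000000 in
lemma finrank_range_DSmap
    [FiniteDimensional ℂ M₀] [FiniteDimensional ℂ M₁]
    [FiniteDimensional ℂ N₀] [FiniteDimensional ℂ N₁]
    (f : M₀ →ₗ[ℂ] M₁) (g : M₁ →ₗ[ℂ] M₀) (f' : N₀ →ₗ[ℂ] N₁) (g' : N₁ →ₗ[ℂ] N₀)
    (hgf : g ∘ₗ f = 0) (hfg : f ∘ₗ g = 0)
    (hg'f' : g' ∘ₗ f' = 0) (hf'g' : f' ∘ₗ g' = 0) :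
    finrank ℂ (range (DSmap f g f' g'))
      = finrank ℂ (range f) * finrank ℂ (N₀ ⧸ range g')
        + finrank ℂ (range g) * finrank ℂ (N₁ ⧸ range f')
        + finrank ℂ (ker f) * finrank ℂ (range f')
        + finrank ℂ (ker g) * finrank ℂ (range g') := by
  -- abbreviations
  have hπ₁f' : (range f').mkQ ∘ₗ f' = 0 := by
    ext v
    simp only [comp_apply, Submodule.mkQ_apply, LinearMap.zero_apply, Submodule.Quotient.mk_eq_zero]
    exact LinearMap.mem_range_self f' v
  have hπ₀g' : (range g').mkQ ∘ₗ g' = 0 := by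
    ext v
    simp only [comp_apply, Submodule.mkQ_apply, LinearMap.zero_apply, Submodule.Quotient.mk_eq_zero]
    exact LinearMap.mem_range_self g' v
  have hfκf : f ∘ₗ (ker f).subtype = 0 := by
    ext x; simpa using x.2
  have hgκg : g ∘ₗ (ker g).subtype = 0 := by
    ext x; simpa using x.2
  have hf'ι₀ : f' ∘ₗ (range g').subtype = 0 := by
    ext x
    obtain ⟨y, hy⟩ := x.2
    simp only [comp_apply, Submodule.coe_subtype, LinearMap.zero_apply, ← hy]
    simpa using LinearMap.congr_fun hf'g' y
  have hg'ι₁ : g' ∘ₗ (range f').subtype = 0 := by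
    ext x
    obtain ⟨y, hy⟩ := x.2
    simp only [comp_apply, Submodule.coe_subtype, LinearMap.zero_apply, ← hy]
    simpa using LinearMap.congr_fun hg'f' y
  set g₀ : M₁ →ₗ[ℂ] (ker f : Submodule ℂ M₀) :=
    g.codRestrict (ker f) (fun m => by simpa using LinearMap.congr_fun hfg m) with hg₀
  set f₀ : M₀ →ₗ[ℂ] (ker g : Submodule ℂ M₁) :=
    f.codRestrict (ker g) (fun m => by simpa using LinearMap.congr_fun hgf m) with hf₀
  -- tensor composition identities
  have heqA : lTensor M₀ f' ∘ₗ rTensor N₀ (ker f).subtype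
      = map (ker f).subtype (range f').subtype ∘ₗ lTensor (ker f) f'.rangeRestrict := by
    apply TensorProduct.ext'; intro x y; simp
  have heqB : rTensor N₁ g ∘ₗ lTensor M₁ (range f').subtype
      = map (ker f).subtype (range f').subtype ∘ₗ rTensor (range f' : Submodule ℂ N₁) g₀ := by
    apply TensorProduct.ext'; intro x y; simp [hg₀]
  have heqC : rTensor N₀ f ∘ₗ lTensor M₀ (range g').subtype
      = map (ker g).subtype (range g').subtype ∘ₗ rTensor (range g' : Submodule ℂ N₀) f₀ := by
    apply TensorProduct.ext'; intro x y; simp [hf₀]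
  have heqD : lTensor M₁ g' ∘ₗ rTensor N₁ (ker g).subtype
      = map (ker g).subtype (range g').subtype ∘ₗ lTensor (ker g) g'.rangeRestrict := by
    apply TensorProduct.ext'; intro x y; simp
  have heqE : lTensor M₀ f' ∘ₗ lTensor M₀ (range g').subtype = 0 := by
    rw [← lTensor_comp, hf'ι₀, lTensor_zero]
  have heqF : rTensor N₁ g ∘ₗ rTensor N₁ (ker g).subtype = 0 := by
    rw [← rTensor_comp, hgκg, rTensor_zero]
  have heqG : rTensor N₀ f ∘ₗ rTensor N₀ (ker f).subtype = 0 := by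
    rw [← rTensor_comp, hfκf, rTensor_zero]
  have heqH : lTensor M₁ g' ∘ₗ lTensor M₁ (range f').subtype = 0 := by
    rw [← lTensor_comp, hg'ι₁, lTensor_zero]
  have heqI : lTensor M₀ ((range f').mkQ) ∘ₗ map (ker f).subtype (range f').subtype = 0 := by
    apply TensorProduct.ext'; intro x y
    have hy0 : (Submodule.Quotient.mk (y : N₁) : N₁ ⧸ range f') = 0 :=
      (Submodule.Quotient.mk_eq_zero _).mpr y.2
    simp [hy0]
  have heqJ : lTensor M₁ ((range g').mkQ) ∘ₗ map (ker g).subtype (range g').subtype = 0 := by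
    apply TensorProduct.ext'; intro x y
    have hy0 : (Submodule.Quotient.mk (y : N₀) : N₀ ⧸ range g') = 0 :=
      (Submodule.Quotient.mk_eq_zero _).mpr y.2
    simp [hy0]
  -- the projection to quotients
  have HA : (prodMap (lTensor M₀ ((range f').mkQ)) (lTensor M₁ ((range g').mkQ)))
        ∘ₗ DSmap f g f' g'
      = (prodMap (map g ((range f').mkQ)) (map f ((range g').mkQ)))
        ∘ₗ ((LinearMap.snd ℂ (M₀ ⊗[ℂ] N₀) (M₁ ⊗[ℂ] N₁)).prod (LinearMap.fst ℂ _ _)) := by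
    apply LinearMap.ext; rintro ⟨a, b⟩
    simp only [comp_apply, DSmap_apply, prodMap_apply, prod_apply, Pi.prod, fst_apply, snd_apply]
    refine Prod.ext ?_ ?_
    · show lTensor M₀ ((range f').mkQ) (lTensor M₀ f' a + rTensor N₁ g b) = map g ((range f').mkQ) b
      rw [map_add, ← comp_apply, ← lTensor_comp, hπ₁f', lTensor_zero, LinearMap.zero_apply, zero_add,
        ← comp_apply, lTensor_comp_rTensor]
    · show lTensor M₁ ((range g').mkQ) (rTensor N₀ f a - lTensor M₁ g' b) = map f ((range g').mkQ) a
      rw [map_sub, ← comp_apply, lTensor_comp_rTensor, ← comp_apply, ← lTensor_comp, hπ₀g',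
        lTensor_zero, LinearMap.zero_apply, sub_zero]
  have hswap : range ((LinearMap.snd ℂ (M₀ ⊗[ℂ] N₀) (M₁ ⊗[ℂ] N₁)).prod (LinearMap.fst ℂ _ _)) = ⊤ := by
    rw [Submodule.eq_top_iff']
    intro x
    exact ⟨(x.2, x.1), rfl⟩
  have hrank1 : finrank ℂ (range ((prodMap (lTensor M₀ ((range f').mkQ)) (lTensor M₁ ((range g').mkQ)))
        ∘ₗ DSmap f g f' g'))
      = finrank ℂ (range g) * finrank ℂ (N₁ ⧸ range f')
        + finrank ℂ (range f) * finrank ℂ (N₀ ⧸ range g') := by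
    rw [HA, range_comp, hswap, Submodule.map_top, range_prodMapL, finrank_prod_sub,
      finrank_range_map_mkQ, finrank_range_map_mkQ]
  -- the intersection
  have hinter : range (DSmap f g f' g')
        ⊓ ker (prodMap (lTensor M₀ ((range f').mkQ)) (lTensor M₁ ((range g').mkQ)))
      = range (prodMap (map (ker f).subtype (range f').subtype)
          (map (ker g).subtype (range g').subtype)) := by
    apply le_antisymm
    · rintro ⟨c, d⟩ ⟨hrange, hker⟩
      obtain ⟨⟨a, b⟩, hab⟩ := hrange
      have hPi : ((prodMap (lTensor M₀ ((range f').mkQ)) (lTensor M₁ ((range g').mkQ)))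
          ∘ₗ DSmap f g f' g') (a, b) = 0 := by
        rw [comp_apply, hab]
        exact LinearMap.mem_ker.mp hker
      rw [HA] at hPi
      simp only [comp_apply, prod_apply, Pi.prod, snd_apply, fst_apply, prodMap_apply,
        Prod.mk_eq_zero] at hPi
      have ha : a ∈ ker (map f ((range g').mkQ)) := hPi.2
      have hb : b ∈ ker (map g ((range f').mkQ)) := hPi.1
      rw [ker_map_mkQ] at ha hb
      obtain ⟨a₁, ha₁, a₂, ha₂, rfl⟩ := Submodule.mem_sup.mp ha
      obtain ⟨u, rfl⟩ := ha₁
      obtain ⟨w, rfl⟩ := ha₂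
      obtain ⟨b₁, hb₁, b₂, hb₂, rfl⟩ := Submodule.mem_sup.mp hb
      obtain ⟨u', rfl⟩ := hb₁
      obtain ⟨w', rfl⟩ := hb₂
      rw [← hab, DSmap_apply, range_prodMapL]
      refine Submodule.mem_prod.mpr ⟨?_, ?_⟩
      · show lTensor M₀ f' (lTensor M₀ (range g').subtype u + rTensor N₀ (ker f).subtype w)
            + rTensor N₁ g (lTensor M₁ (range f').subtype u' + rTensor N₁ (ker g).subtype w')
          ∈ range (map (ker f).subtype (range f').subtype)
        rw [map_add, map_add, ← comp_apply, heqE, LinearMap.zero_apply, zero_add,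
          ← comp_apply, heqA, ← comp_apply (rTensor N₁ g), heqB,
          ← comp_apply (rTensor N₁ g), heqF, LinearMap.zero_apply, add_zero,
          comp_apply, comp_apply, ← map_add]
        exact LinearMap.mem_range_self _ _
      · show rTensor N₀ f (lTensor M₀ (range g').subtype u + rTensor N₀ (ker f).subtype w)
            - lTensor M₁ g' (lTensor M₁ (range f').subtype u' + rTensor N₁ (ker g).subtype w')
          ∈ range (map (ker g).subtype (range g').subtype)
        rw [map_add, map_add, ← comp_apply, heqC, ← comp_apply (rTensor N₀ f), heqG,
          LinearMap.zero_apply, add_zero, ← comp_apply (lTensor M₁ g'), heqH, LinearMap.zero_apply, zero_add,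
          ← comp_apply (lTensor M₁ g'), heqD, comp_apply, comp_apply, ← map_sub]
        exact LinearMap.mem_range_self _ _
    · rintro ⟨c, d⟩ h
      rw [range_prodMapL] at h
      have hcm : c ∈ range (map (ker f).subtype (range f').subtype) :=
        (Submodule.mem_prod.mp h).1
      have hdm : d ∈ range (map (ker g).subtype (range g').subtype) :=
        (Submodule.mem_prod.mp h).2
      obtain ⟨y, hy⟩ := hcm
      obtain ⟨y', hy'⟩ := hdm
      obtain ⟨z, hz⟩ := LinearMap.lTensor_surjective (ker f : Submodule ℂ M₀)
        f'.surjective_rangeRestrict y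
      obtain ⟨z', hz'⟩ := LinearMap.lTensor_surjective (ker g : Submodule ℂ M₁)
        g'.surjective_rangeRestrict y'
      refine Submodule.mem_inf.mpr ⟨?_, ?_⟩
      · refine ⟨(rTensor N₀ (ker f).subtype z, -(rTensor N₁ (ker g).subtype z')), ?_⟩
        rw [DSmap_apply]
        have c1 : lTensor M₀ f' (rTensor N₀ (ker f).subtype z) = c := by
          rw [← comp_apply, heqA, comp_apply, hz, hy]
        have c2 : rTensor N₁ g (-(rTensor N₁ (ker g).subtype z')) = 0 := by
          rw [map_neg, ← comp_apply, heqF, LinearMap.zero_apply, neg_zero]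
        have c3 : rTensor N₀ f (rTensor N₀ (ker f).subtype z) = 0 := by
          rw [← comp_apply, heqG, LinearMap.zero_apply]
        have c4 : lTensor M₁ g' (-(rTensor N₁ (ker g).subtype z')) = -d := by
          rw [map_neg, ← comp_apply, heqD, comp_apply, hz', hy']
        rw [c1, c2, c3, c4]
        simp
      · rw [LinearMap.mem_ker]
        have k1 : lTensor M₀ ((range f').mkQ) c = 0 := by
          rw [← hy, ← comp_apply, heqI, LinearMap.zero_apply]
        have k2 : lTensor M₁ ((range g').mkQ) d = 0 := by
          rw [← hy', ← comp_apply, heqJ, LinearMap.zero_apply]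
        show (lTensor M₀ ((range f').mkQ) c, lTensor M₁ ((range g').mkQ) d) = 0
        rw [k1, k2]
        rfl
  have hinj1 : Function.Injective (map (ker f).subtype (range f').subtype) := by
    rw [← lTensor_comp_rTensor, coe_comp]
    exact (Module.Flat.lTensor_preserves_injective_linearMap _
        (Submodule.injective_subtype _)).comp
      (Module.Flat.rTensor_preserves_injective_linearMap _ (Submodule.injective_subtype _))
  have hinj2 : Function.Injective (map (ker g).subtype (range g').subtype) := by
    rw [← lTensor_comp_rTensor, coe_comp]
    exact (Module.Flat.lTensor_preserves_injective_linearMap _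
        (Submodule.injective_subtype _)).comp
      (Module.Flat.rTensor_preserves_injective_linearMap _ (Submodule.injective_subtype _))
  have hinj : Function.Injective (prodMap (map (ker f).subtype (range f').subtype)
      (map (ker g).subtype (range g').subtype)) := by
    rintro ⟨x1, x2⟩ ⟨y1, y2⟩ hxy
    obtain ⟨h1, h2⟩ := Prod.ext_iff.mp hxy
    exact Prod.ext (hinj1 h1) (hinj2 h2)
  have hrank2 : finrank ℂ (range (DSmap f g f' g')
        ⊓ ker (prodMap (lTensor M₀ ((range f').mkQ)) (lTensor M₁ ((range g').mkQ)))
        : Submodule ℂ _)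
      = finrank ℂ (ker f) * finrank ℂ (range f') + finrank ℂ (ker g) * finrank ℂ (range g') := by
    rw [hinter, LinearMap.finrank_range_of_inj hinj, Module.finrank_prod,
      Module.finrank_tensorProduct, Module.finrank_tensorProduct]
  rw [rank_split (DSmap f g f' g')
      (prodMap (lTensor M₀ ((range f').mkQ)) (lTensor M₁ ((range g').mkQ))), hrank1, hrank2]
  ring


end DSaux

open DSaux

set_option maxHeartbeats 2000000

/-- `DS_x(M ⊗ N) ≅ DS_x(M) ⊗ DS_x(N)` on the level of
super vector spaces: if `F` and `G` are the even-to-odd and odd-to-even parts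
of the super-Leibniz action of the odd square-zero operators `x = (f,g)` on `M`
and `x = (f',g')` on `N`, then `G ∘ F = 0`, `F ∘ G = 0`, and the even and odd
superdimension contributions of `ker/im` multiply as for a tensor product. -/
theorem DS_tensor_product
    (M₀ M₁ N₀ N₁ : Type*)
    [AddCommGroup M₀] [Module ℂ M₀] [AddCommGroup M₁] [Module ℂ M₁]
    [AddCommGroup N₀] [Module ℂ N₀] [AddCommGroup N₁] [Module ℂ N₁]
    [FiniteDimensional ℂ M₀] [FiniteDimensional ℂ M₁]
    [FiniteDimensional ℂ N₀] [FiniteDimensional ℂ N₁]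
    (f : M₀ →ₗ[ℂ] M₁) (g : M₁ →ₗ[ℂ] M₀)
    (f' : N₀ →ₗ[ℂ] N₁) (g' : N₁ →ₗ[ℂ] N₀)
    (hgf : g ∘ₗ f = 0) (hfg : f ∘ₗ g = 0)
    (hg'f' : g' ∘ₗ f' = 0) (hf'g' : f' ∘ₗ g' = 0)
    (F : (M₀ ⊗[ℂ] N₀) × (M₁ ⊗[ℂ] N₁) →ₗ[ℂ] (M₀ ⊗[ℂ] N₁) × (M₁ ⊗[ℂ] N₀))
    (G : (M₀ ⊗[ℂ] N₁) × (M₁ ⊗[ℂ] N₀) →ₗ[ℂ] (M₀ ⊗[ℂ] N₀) × (M₁ ⊗[ℂ] N₁))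
    (hF₀ : ∀ (m : M₀) (v : N₀), F (m ⊗ₜ v, 0) = (m ⊗ₜ f' v, f m ⊗ₜ v))
    (hF₁ : ∀ (m : M₁) (v : N₁), F (0, m ⊗ₜ v) = (g m ⊗ₜ v, -(m ⊗ₜ g' v)))
    (hG₀ : ∀ (m : M₀) (v : N₁), G (m ⊗ₜ v, 0) = (m ⊗ₜ g' v, f m ⊗ₜ v))
    (hG₁ : ∀ (m : M₁) (v : N₀), G (0, m ⊗ₜ v) = (g m ⊗ₜ v, -(m ⊗ₜ f' v))) :
    G ∘ₗ F = 0 ∧ F ∘ₗ G = 0 ∧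
    (finrank ℂ (LinearMap.ker F) : ℤ) - (finrank ℂ (LinearMap.range G) : ℤ)
      = ((finrank ℂ (LinearMap.ker f) : ℤ) - (finrank ℂ (LinearMap.range g) : ℤ))
          * ((finrank ℂ (LinearMap.ker f') : ℤ) - (finrank ℂ (LinearMap.range g') : ℤ))
        + ((finrank ℂ (LinearMap.ker g) : ℤ) - (finrank ℂ (LinearMap.range f) : ℤ))
          * ((finrank ℂ (LinearMap.ker g') : ℤ) - (finrank ℂ (LinearMap.range f') : ℤ)) ∧
    (finrank ℂ (LinearMap.ker G) : ℤ) - (finrank ℂ (LinearMap.range F) : ℤ)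
      = ((finrank ℂ (LinearMap.ker f) : ℤ) - (finrank ℂ (LinearMap.range g) : ℤ))
          * ((finrank ℂ (LinearMap.ker g') : ℤ) - (finrank ℂ (LinearMap.range f') : ℤ))
        + ((finrank ℂ (LinearMap.ker g) : ℤ) - (finrank ℂ (LinearMap.range f) : ℤ))
          * ((finrank ℂ (LinearMap.ker f') : ℤ) - (finrank ℂ (LinearMap.range g') : ℤ)) := by
  have hF : F = DSmap f g f' g' := eq_DSmap f g f' g' F hF₀ hF₁
  have hG : G = DSmap f g g' f' := eq_DSmap f g g' f' G hG₀ hG₁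
  -- rank formulas
  have hRF : finrank ℂ (LinearMap.range F)
      = finrank ℂ (LinearMap.range f) * finrank ℂ (N₀ ⧸ LinearMap.range g')
        + finrank ℂ (LinearMap.range g) * finrank ℂ (N₁ ⧸ LinearMap.range f')
        + finrank ℂ (LinearMap.ker f) * finrank ℂ (LinearMap.range f')
        + finrank ℂ (LinearMap.ker g) * finrank ℂ (LinearMap.range g') := by
    rw [hF]; exact finrank_range_DSmap f g f' g' hgf hfg hg'f' hf'g'
  have hRG : finrank ℂ (LinearMap.range G)
      = finrank ℂ (LinearMap.range f) * finrank ℂ (N₁ ⧸ LinearMap.range f')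
        + finrank ℂ (LinearMap.range g) * finrank ℂ (N₀ ⧸ LinearMap.range g')
        + finrank ℂ (LinearMap.ker f) * finrank ℂ (LinearMap.range g')
        + finrank ℂ (LinearMap.ker g) * finrank ℂ (LinearMap.range f') := by
    rw [hG]; exact finrank_range_DSmap f g g' f' hgf hfg hf'g' hg'f'
  -- rank-nullity facts
  have eKF := LinearMap.finrank_range_add_finrank_ker F
  rw [Module.finrank_prod, Module.finrank_tensorProduct, Module.finrank_tensorProduct] at eKF
  have eKG := LinearMap.finrank_range_add_finrank_ker G
  rw [Module.finrank_prod, Module.finrank_tensorProduct, Module.finrank_tensorProduct] at eKG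
  have e1 := LinearMap.finrank_range_add_finrank_ker f
  have e2 := LinearMap.finrank_range_add_finrank_ker g
  have e3 := LinearMap.finrank_range_add_finrank_ker f'
  have e4 := LinearMap.finrank_range_add_finrank_ker g'
  have q0 := Submodule.finrank_quotient_add_finrank (LinearMap.range g')
  have q1 := Submodule.finrank_quotient_add_finrank (LinearMap.range f')
  -- integer versions
  have zKF : (finrank ℂ (LinearMap.ker F) : ℤ)
      = (finrank ℂ M₀ : ℤ) * (finrank ℂ N₀ : ℤ) + (finrank ℂ M₁ : ℤ) * (finrank ℂ N₁ : ℤ)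
        - (finrank ℂ (LinearMap.range F) : ℤ) := by
    have : ((finrank ℂ (LinearMap.range F) : ℤ)) + (finrank ℂ (LinearMap.ker F) : ℤ)
        = (finrank ℂ M₀ : ℤ) * (finrank ℂ N₀ : ℤ) + (finrank ℂ M₁ : ℤ) * (finrank ℂ N₁ : ℤ) := by
      exact_mod_cast eKF
    linarith
  have zKG : (finrank ℂ (LinearMap.ker G) : ℤ)
      = (finrank ℂ M₀ : ℤ) * (finrank ℂ N₁ : ℤ) + (finrank ℂ M₁ : ℤ) * (finrank ℂ N₀ : ℤ)
        - (finrank ℂ (LinearMap.range G) : ℤ) := by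
    have : ((finrank ℂ (LinearMap.range G) : ℤ)) + (finrank ℂ (LinearMap.ker G) : ℤ)
        = (finrank ℂ M₀ : ℤ) * (finrank ℂ N₁ : ℤ) + (finrank ℂ M₁ : ℤ) * (finrank ℂ N₀ : ℤ) := by
      exact_mod_cast eKG
    linarith
  have zRF : (finrank ℂ (LinearMap.range F) : ℤ)
      = (finrank ℂ (LinearMap.range f) : ℤ) * (finrank ℂ (N₀ ⧸ LinearMap.range g') : ℤ)
        + (finrank ℂ (LinearMap.range g) : ℤ) * (finrank ℂ (N₁ ⧸ LinearMap.range f') : ℤ)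
        + (finrank ℂ (LinearMap.ker f) : ℤ) * (finrank ℂ (LinearMap.range f') : ℤ)
        + (finrank ℂ (LinearMap.ker g) : ℤ) * (finrank ℂ (LinearMap.range g') : ℤ) := by
    exact_mod_cast hRF
  have zRG : (finrank ℂ (LinearMap.range G) : ℤ)
      = (finrank ℂ (LinearMap.range f) : ℤ) * (finrank ℂ (N₁ ⧸ LinearMap.range f') : ℤ)
        + (finrank ℂ (LinearMap.range g) : ℤ) * (finrank ℂ (N₀ ⧸ LinearMap.range g') : ℤ)
        + (finrank ℂ (LinearMap.ker f) : ℤ) * (finrank ℂ (LinearMap.range g') : ℤ)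
        + (finrank ℂ (LinearMap.ker g) : ℤ) * (finrank ℂ (LinearMap.range f') : ℤ) := by
    exact_mod_cast hRG
  have zq0 : (finrank ℂ (N₀ ⧸ LinearMap.range g') : ℤ)
      = (finrank ℂ N₀ : ℤ) - (finrank ℂ (LinearMap.range g') : ℤ) := by
    have : (finrank ℂ (N₀ ⧸ LinearMap.range g') : ℤ) + (finrank ℂ (LinearMap.range g') : ℤ)
        = (finrank ℂ N₀ : ℤ) := by exact_mod_cast q0
    linarith
  have zq1 : (finrank ℂ (N₁ ⧸ LinearMap.range f') : ℤ)
      = (finrank ℂ N₁ : ℤ) - (finrank ℂ (LinearMap.range f') : ℤ) := by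
    have : (finrank ℂ (N₁ ⧸ LinearMap.range f') : ℤ) + (finrank ℂ (LinearMap.range f') : ℤ)
        = (finrank ℂ N₁ : ℤ) := by exact_mod_cast q1
    linarith
  have zkf : (finrank ℂ (LinearMap.ker f) : ℤ)
      = (finrank ℂ M₀ : ℤ) - (finrank ℂ (LinearMap.range f) : ℤ) := by
    have : (finrank ℂ (LinearMap.range f) : ℤ) + (finrank ℂ (LinearMap.ker f) : ℤ)
        = (finrank ℂ M₀ : ℤ) := by exact_mod_cast e1
    linarith
  have zkg : (finrank ℂ (LinearMap.ker g) : ℤ)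
      = (finrank ℂ M₁ : ℤ) - (finrank ℂ (LinearMap.range g) : ℤ) := by
    have : (finrank ℂ (LinearMap.range g) : ℤ) + (finrank ℂ (LinearMap.ker g) : ℤ)
        = (finrank ℂ M₁ : ℤ) := by exact_mod_cast e2
    linarith
  have zkf' : (finrank ℂ (LinearMap.ker f') : ℤ)
      = (finrank ℂ N₀ : ℤ) - (finrank ℂ (LinearMap.range f') : ℤ) := by
    have : (finrank ℂ (LinearMap.range f') : ℤ) + (finrank ℂ (LinearMap.ker f') : ℤ)
        = (finrank ℂ N₀ : ℤ) := by exact_mod_cast e3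
    linarith
  have zkg' : (finrank ℂ (LinearMap.ker g') : ℤ)
      = (finrank ℂ N₁ : ℤ) - (finrank ℂ (LinearMap.range g') : ℤ) := by
    have : (finrank ℂ (LinearMap.range g') : ℤ) + (finrank ℂ (LinearMap.ker g') : ℤ)
        = (finrank ℂ N₁ : ℤ) := by exact_mod_cast e4
    linarith
  refine ⟨?_, ?_, ?_, ?_⟩
  · rw [hF, hG]; exact comp_DSmap_zero f g f' g' hgf hfg hg'f' hf'g'
  · rw [hF, hG]; exact comp_DSmap_zero f g g' f' hgf hfg hf'g' hg'f'
  · rw [zKF, zRF, zRG, zq0, zq1, zkf, zkg, zkf', zkg']; ring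
  · rw [zKG, zRF, zRG, zq0, zq1, zkf, zkg, zkf', zkg']; ring
end

section
/- Let n ≥ 1, let C ∈ Mₙ(ℂ) satisfy Cᵀ = −C and rank C = s, and let x = fromBlocks 0 0 C 0 ∈ M_{2n}(ℂ) (an odd element of the periplectic Lie superalgebra p(n)). Then x · x = 0, range x ⊆ ker x, the quotient ker x / range x has dimension 2(n − s), and more precisely the image in this quotient of ker x ∩ (ℂⁿ ⊕ 0) has dimension n − s and the image of ker x ∩ (0 ⊕ ℂⁿ) has dimension n − s; that is, DS_x of the natural representation ℂ^(n|n) of p(n) is the super vector space ℂ^(n−s|n−s). -/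
open Matrix Module

/-- The odd element `x = fromBlocks 0 0 C 0` of the periplectic Lie superalgebra `p(n)`
(for `C` antisymmetric), as a `2n × 2n` matrix. -/
noncomputable def periplecticX (n : ℕ) (C : Matrix (Fin n) (Fin n) ℂ) :
    Matrix (Fin n ⊕ Fin n) (Fin n ⊕ Fin n) ℂ :=
  Matrix.fromBlocks 0 0 C 0

/-- The even subspace `ℂⁿ ⊕ 0` of `ℂ^(n|n)` (vectors vanishing on the odd coordinates). -/
noncomputable def evenSubspace (n : ℕ) : Submodule ℂ (Fin n ⊕ Fin n → ℂ) :=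
  LinearMap.ker (LinearMap.funLeft ℂ ℂ (Sum.inr : Fin n → Fin n ⊕ Fin n))

/-- The odd subspace `0 ⊕ ℂⁿ` of `ℂ^(n|n)` (vectors vanishing on the even coordinates). -/
noncomputable def oddSubspace (n : ℕ) : Submodule ℂ (Fin n ⊕ Fin n → ℂ) :=
  LinearMap.ker (LinearMap.funLeft ℂ ℂ (Sum.inl : Fin n → Fin n ⊕ Fin n))

/-- Extension by zero along `Sum.inl`. -/
def inlMap (n : ℕ) : (Fin n → ℂ) →ₗ[ℂ] (Fin n ⊕ Fin n → ℂ) where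
  toFun u := Sum.elim u 0
  map_add' u v := funext fun x => by cases x <;> simp
  map_smul' c u := funext fun x => by cases x <;> simp

/-- Extension by zero along `Sum.inr`. -/
def inrMap (n : ℕ) : (Fin n → ℂ) →ₗ[ℂ] (Fin n ⊕ Fin n → ℂ) where
  toFun u := Sum.elim 0 u
  map_add' u v := funext fun x => by cases x <;> simp
  map_smul' c u := funext fun x => by cases x <;> simp

theorem inlMap_injective (n : ℕ) : Function.Injective (inlMap n) := fun a b h =>
  funext fun i => congrFun h (Sum.inl i)

theorem inrMap_injective (n : ℕ) : Function.Injective (inrMap n) := fun a b h =>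
  funext fun i => congrFun h (Sum.inr i)

theorem finrank_map_mkQ_add {M : Type*} [AddCommGroup M] [Module ℂ M] [FiniteDimensional ℂ M]
    (R' p' : Submodule ℂ M) :
    Module.finrank ℂ (Submodule.map R'.mkQ p') + Module.finrank ℂ (R'.comap p'.subtype)
      = Module.finrank ℂ p' := by
  have hmap : Submodule.map R'.mkQ p' = LinearMap.range (R'.mkQ ∘ₗ p'.subtype) := by
    rw [LinearMap.range_comp, Submodule.range_subtype]
  have hker : LinearMap.ker (R'.mkQ ∘ₗ p'.subtype) = R'.comap p'.subtype := by
    rw [LinearMap.ker_comp, Submodule.ker_mkQ]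
  have h := LinearMap.finrank_range_add_finrank_ker (R'.mkQ ∘ₗ p'.subtype)
  rw [hker, hmap] at *
  omega

/-- Generic computation of the dimensions of `DS`-type quotients. -/
theorem DS_aux {V : Type*} [AddCommGroup V] [Module ℂ V] [FiniteDimensional ℂ V]
    (K E O R : Submodule ℂ V) (a b c : ℕ)
    (hRK : R ≤ K) (hRO : R ≤ O) (hOK : O ≤ K)
    (hfinR : Module.finrank ℂ R = c)
    (hfinK : Module.finrank ℂ K = a)
    (hfinEK : Module.finrank ℂ ↥(E ⊓ K) = b)
    (hfinO : Module.finrank ℂ O = b + c)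
    (hREbot : R ⊓ E = ⊥) :
    Module.finrank ℂ (↥K ⧸ R.comap K.subtype) = a - c ∧
    Module.finrank ℂ (Submodule.map (R.comap K.subtype).mkQ (E.comap K.subtype)) = b ∧
    Module.finrank ℂ (Submodule.map (R.comap K.subtype).mkQ (O.comap K.subtype)) = b := by
  set R' := R.comap K.subtype with hR'def
  have hfinR' : Module.finrank ℂ R' = c :=
    (Submodule.comapSubtypeEquivOfLe hRK).finrank_eq.trans hfinR
  refine ⟨?_, ?_, ?_⟩
  · have h := Submodule.finrank_quotient_add_finrank R'
    rw [hfinR', hfinK] at h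
    omega
  · set p'' := E.comap K.subtype with hp''def
    have hbot : R'.comap p''.subtype = ⊥ := by
      rw [Submodule.eq_bot_iff]
      intro z hz
      have hz' : ((z : K) : V) ∈ R := hz
      have hzE : ((z : K) : V) ∈ E := z.2
      have h0 : ((z : K) : V) = 0 := by
        have : ((z : K) : V) ∈ R ⊓ E := ⟨hz', hzE⟩
        rw [hREbot] at this
        exact this
      exact Subtype.ext (Subtype.ext h0)
    have hp''eq : p'' = (E ⊓ K).comap K.subtype := by
      rw [hp''def, Submodule.comap_inf, Submodule.comap_subtype_self, inf_top_eq]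
    have hfinp'' : Module.finrank ℂ p'' = b := by
      rw [hp''eq]
      exact (Submodule.comapSubtypeEquivOfLe inf_le_right).finrank_eq.trans hfinEK
    have h := finrank_map_mkQ_add R' p''
    rw [hbot, hfinp'', finrank_bot] at h
    omega
  · set p' := O.comap K.subtype with hp'def
    have hR'p' : R' ≤ p' := Submodule.comap_mono hRO
    have hfinp' : Module.finrank ℂ p' = b + c :=
      (Submodule.comapSubtypeEquivOfLe hOK).finrank_eq.trans hfinO
    have hfinker : Module.finrank ℂ (R'.comap p'.subtype) = c :=
      (Submodule.comapSubtypeEquivOfLe hR'p').finrank_eq.trans hfinR'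
    have h := finrank_map_mkQ_add R' p'
    rw [hfinker, hfinp'] at h
    omega


set_option synthInstance.maxHeartbeats 400000 in
/-- For `C` antisymmetric of rank `s` and `x = fromBlocks 0 0 C 0`,
one has `x² = 0`, `im x ⊆ ker x`, `dim (ker x / im x) = 2(n-s)`, and the images in
`ker x / im x` of `ker x ∩ (ℂⁿ ⊕ 0)` and of `ker x ∩ (0 ⊕ ℂⁿ)` each have
dimension `n - s`; that is, `DS_x(ℂ^(n|n)) = ℂ^(n-s|n-s)`. -/
theorem DS_natural_representation (n s : ℕ) (hn : 1 ≤ n)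
    (C : Matrix (Fin n) (Fin n) ℂ) (hC : Cᵀ = -C) (hrk : C.rank = s) :
    periplecticX n C * periplecticX n C = 0 ∧
    LinearMap.range (periplecticX n C).mulVecLin
      ≤ LinearMap.ker (periplecticX n C).mulVecLin ∧
    finrank ℂ
      (LinearMap.ker (periplecticX n C).mulVecLin ⧸
        (LinearMap.range (periplecticX n C).mulVecLin).comap
          (LinearMap.ker (periplecticX n C).mulVecLin).subtype)
      = 2 * (n - s) ∧
    finrank ℂ
      (Submodule.map
        ((LinearMap.range (periplecticX n C).mulVecLin).comap
          (LinearMap.ker (periplecticX n C).mulVecLin).subtype).mkQ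
        ((evenSubspace n).comap (LinearMap.ker (periplecticX n C).mulVecLin).subtype))
      = n - s ∧
    finrank ℂ
      (Submodule.map
        ((LinearMap.range (periplecticX n C).mulVecLin).comap
          (LinearMap.ker (periplecticX n C).mulVecLin).subtype).mkQ
        ((oddSubspace n).comap (LinearMap.ker (periplecticX n C).mulVecLin).subtype))
      = n - s := by
  have hxx : periplecticX n C * periplecticX n C = 0 := by
    simp [periplecticX, Matrix.fromBlocks_multiply]
  set f := (periplecticX n C).mulVecLin with hfdef
  set K := LinearMap.ker f with hKdef
  set R := LinearMap.range f with hRdef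
  have hfv : ∀ v : Fin n ⊕ Fin n → ℂ,
      f v = Sum.elim (0 : Fin n → ℂ) (C.mulVec (v ∘ Sum.inl)) := by
    intro v
    funext j
    cases j with
    | inl i =>
        simp [hfdef, periplecticX, Matrix.mulVecLin_apply, Matrix.mulVec, dotProduct,
          Fintype.sum_sum_type]
    | inr i =>
        simp [hfdef, periplecticX, Matrix.mulVecLin_apply, Matrix.mulVec, dotProduct,
          Fintype.sum_sum_type]
  have hrange_le : R ≤ K := by
    rw [hKdef, hRdef, LinearMap.range_le_ker_iff, hfdef, ← Matrix.mulVecLin_mul, hxx,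
      Matrix.mulVecLin_zero]
  have hKmem : ∀ v : Fin n ⊕ Fin n → ℂ, v ∈ K ↔ C.mulVec (v ∘ Sum.inl) = 0 := by
    intro v
    rw [hKdef, LinearMap.mem_ker, hfv]
    constructor
    · intro h
      funext i
      exact congrFun h (Sum.inr i)
    · intro h
      rw [h]
      funext j
      cases j <;> rfl
  have hR : R = Submodule.map (inrMap n) (LinearMap.range C.mulVecLin) := by
    ext w
    simp only [hRdef, LinearMap.mem_range, Submodule.mem_map]
    constructor
    · rintro ⟨v, rfl⟩
      exact ⟨C.mulVec (v ∘ Sum.inl), ⟨v ∘ Sum.inl, rfl⟩, (hfv v).symm⟩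
    · rintro ⟨w', ⟨u, rfl⟩, rfl⟩
      exact ⟨Sum.elim u 0, by rw [hfv]; rfl⟩
  have hs_le : s ≤ n := by
    rw [← hrk]
    exact C.rank_le_card_width.trans (by simp)
  have hrngC : finrank ℂ (LinearMap.range C.mulVecLin) = s := hrk
  have hU : finrank ℂ (Fin n → ℂ) = n := by simp
  have hV : finrank ℂ (Fin n ⊕ Fin n → ℂ) = n + n := by
    simp [Module.finrank_pi]
  have hkerC : finrank ℂ (LinearMap.ker C.mulVecLin) = n - s := by
    have h := LinearMap.finrank_range_add_finrank_ker C.mulVecLin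
    rw [hrngC, hU] at h
    omega
  have hfinR : finrank ℂ R = s := by
    rw [hR, ← hrngC]
    exact (Submodule.equivMapOfInjective _ (inrMap_injective n) _).finrank_eq.symm
  have hfinK : finrank ℂ K = n + n - s := by
    have h := LinearMap.finrank_range_add_finrank_ker f
    rw [← hRdef, ← hKdef, hfinR, hV] at h
    omega
  have hodd_le : oddSubspace n ≤ K := by
    intro v hv
    rw [hKmem]
    have h0 : v ∘ Sum.inl = 0 := hv
    rw [h0, Matrix.mulVec_zero]
  have hR_le_odd : R ≤ oddSubspace n := by
    rw [hRdef]
    rintro w ⟨v, rfl⟩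
    show (f v) ∘ Sum.inl = 0
    rw [hfv]
    rfl
  have hEK : evenSubspace n ⊓ K = Submodule.map (inlMap n) (LinearMap.ker C.mulVecLin) := by
    ext v
    simp only [Submodule.mem_inf, Submodule.mem_map]
    constructor
    · rintro ⟨hev, hK⟩
      refine ⟨v ∘ Sum.inl, (hKmem v).mp hK, ?_⟩
      funext j
      cases j with
      | inl i => rfl
      | inr i =>
          have h0 : v ∘ Sum.inr = 0 := hev
          exact (congrFun h0 i).symm
    · rintro ⟨u, hu, rfl⟩
      refine ⟨?_, (hKmem _).mpr ?_⟩
      · show ((inlMap n) u) ∘ Sum.inr = 0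
        funext i
        rfl
      · exact hu
  have hfinEK : finrank ℂ ↥(evenSubspace n ⊓ K) = n - s := by
    rw [hEK, ← hkerC]
    exact (Submodule.equivMapOfInjective _ (inlMap_injective n) _).finrank_eq.symm
  have hREbot : R ⊓ evenSubspace n = ⊥ := by
    rw [Submodule.eq_bot_iff]
    rintro v ⟨hvR, hvE⟩
    rw [hR] at hvR
    obtain ⟨u, -, rfl⟩ := hvR
    have hev : ((inrMap n) u) ∘ Sum.inr = 0 := hvE
    have hu0 : u = 0 := funext fun i => congrFun hev i
    rw [hu0, map_zero]
  have hfinodd : finrank ℂ (oddSubspace n) = n := by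
    have h := LinearMap.finrank_range_add_finrank_ker
      (LinearMap.funLeft ℂ ℂ (Sum.inl : Fin n → Fin n ⊕ Fin n))
    rw [LinearMap.range_eq_top.mpr
      (LinearMap.funLeft_surjective_of_injective ℂ ℂ _ Sum.inl_injective),
      finrank_top, hU, hV] at h
    have heq : finrank ℂ (oddSubspace n) =
        finrank ℂ (LinearMap.ker (LinearMap.funLeft ℂ ℂ (Sum.inl : Fin n → Fin n ⊕ Fin n))) :=
      rfl
    omega
  have hfinO : finrank ℂ (oddSubspace n) = (n - s) + s := by omega
  obtain ⟨h1, h2, h3⟩ := DS_aux K (evenSubspace n) (oddSubspace n) R (n + n - s) (n - s) s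
    hrange_le hR_le_odd hodd_le hfinR hfinK hfinEK hfinO hREbot
  refine ⟨hxx, hrange_le, by omega, h2, h3⟩
end

section
/- Let n ≥ 1, let C ∈ Mₙ(ℂ) satisfy Cᵀ = −C and rank C = s (with s ≤ n), and let x = fromBlocks 0 0 C 0 ∈ M_{2n}(ℂ). Let E ⊆ M_{2n}(ℂ) be the subspace of matrices fromBlocks A 0 0 (−Aᵀ) with A ∈ Mₙ(ℂ) (the even part of p(n)), and O ⊆ M_{2n}(ℂ) the subspace of matrices fromBlocks 0 B C' 0 with Bᵀ = B and C'ᵀ = −C' (the odd part of p(n)). Then: (1) for every Y ∈ E one has xY − Yx ∈ O, defining a linear map d₁ : E → O; (2) for every Y ∈ O one has xY + Yx ∈ E, defining a linear map d₀ : O → E; (3) d₀ ∘ d₁ = 0 and d₁ ∘ d₀ = 0; and (4) finrank(ker d₁ / range d₀) = (n − s)² and finrank(ker d₀ / range d₁) = (n − s)². That is, the Duflo–Serganova space DS_x(p(n)) of p(n) under the super-adjoint action of x has the same even and odd dimensions as p(n − s). -/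
open Matrix Module

section Helpers
variable {M N : Type*} [AddCommGroup M] [AddCommGroup N] [Module ℂ M] [Module ℂ N]

lemma finrank_map_inj (f : M →ₗ[ℂ] N) (hf : Function.Injective f) (p : Submodule ℂ M) :
    finrank ℂ (p.map f) = finrank ℂ p :=
  (Submodule.equivMapOfInjective f hf p).finrank_eq.symm

lemma finrank_prod_sub [FiniteDimensional ℂ M] [FiniteDimensional ℂ N]
    (p : Submodule ℂ M) (q : Submodule ℂ N) :
    finrank ℂ (p.prod q) = finrank ℂ p + finrank ℂ q := by
  have e : (p.prod q) ≃ₗ[ℂ] p × q :=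
    { toFun := fun x => (⟨x.1.1, x.2.1⟩, ⟨x.1.2, x.2.2⟩)
      map_add' := fun x y => rfl
      map_smul' := fun c x => rfl
      invFun := fun x => ⟨(x.1.1, x.2.1), ⟨x.1.2, x.2.2⟩⟩
      left_inv := fun x => rfl
      right_inv := fun x => rfl }
  rw [e.finrank_eq, Module.finrank_prod]

lemma finrank_quot_helper [FiniteDimensional ℂ M] (S T : Submodule ℂ M) (hTS : T ≤ S) :
    finrank ℂ (S ⧸ T.comap S.subtype) + finrank ℂ T = finrank ℂ S := by
  have h1 := Submodule.finrank_quotient_add_finrank (T.comap S.subtype)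
  have h2 : finrank ℂ ((T.comap S.subtype).map S.subtype) = finrank ℂ (T.comap S.subtype) :=
    finrank_map_inj _ (Submodule.injective_subtype S) _
  rw [Submodule.map_comap_subtype, inf_eq_right.mpr hTS] at h2
  rw [← h2] at h1
  simpa using h1
lemma finrank_comap_equiv {M N : Type*} [AddCommGroup M] [AddCommGroup N] [Module ℂ M]
    [Module ℂ N] (e : M ≃ₗ[ℂ] N) (P : Submodule ℂ N) :
    finrank ℂ (P.comap e.toLinearMap) = finrank ℂ P := by
  have h : P.comap e.toLinearMap = P.map e.symm.toLinearMap := by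
    ext x
    simp only [Submodule.mem_comap, Submodule.mem_map]
    constructor
    · intro h; exact ⟨e x, h, by simp⟩
    · rintro ⟨y, hy, rfl⟩; simpa using hy
  rw [h, finrank_map_inj _ e.symm.injective]
lemma finrank_map_add_inf_ker {M N : Type*} [AddCommGroup M] [AddCommGroup N] [Module ℂ M]
    [Module ℂ N] [FiniteDimensional ℂ M] (f : M →ₗ[ℂ] N) (p : Submodule ℂ M) :
    finrank ℂ (p.map f) + finrank ℂ (p ⊓ LinearMap.ker f : Submodule ℂ M) = finrank ℂ p := by
  have h := LinearMap.finrank_range_add_finrank_ker (f.comp p.subtype)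
  rw [LinearMap.range_comp, Submodule.range_subtype, LinearMap.ker_comp] at h
  have h2 : finrank ℂ ((LinearMap.ker f).comap p.subtype) =
      finrank ℂ (p ⊓ LinearMap.ker f : Submodule ℂ M) := by
    rw [← Submodule.map_comap_subtype]
    exact (finrank_map_inj p.subtype (Submodule.injective_subtype p) _).symm
  rw [h2] at h
  exact h

end Helpers

section SymSkew
variable (ι : Type*) [Fintype ι] [DecidableEq ι]

noncomputable def symSub : Submodule ℂ (Matrix ι ι ℂ) where
  carrier := {B | Bᵀ = B}
  add_mem' := by intro a b ha hb; simp_all [Matrix.transpose_add]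
  zero_mem' := by simp
  smul_mem' := by intro c a ha; simp_all [Matrix.transpose_smul]

noncomputable def skewSub : Submodule ℂ (Matrix ι ι ℂ) where
  carrier := {B | Bᵀ = -B}
  add_mem' := by intro a b ha hb; simp_all [Matrix.transpose_add]; abel
  zero_mem' := by simp
  smul_mem' := by intro c a ha; simp_all [Matrix.transpose_smul]

@[simp] lemma mem_symSub {B : Matrix ι ι ℂ} : B ∈ symSub ι ↔ Bᵀ = B := Iff.rfl
@[simp] lemma mem_skewSub {B : Matrix ι ι ℂ} : B ∈ skewSub ι ↔ Bᵀ = -B := Iff.rfl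

lemma sym_skew_finrank : finrank ℂ (symSub ι) + finrank ℂ (skewSub ι) =
    Fintype.card ι * Fintype.card ι := by
  have hsup : symSub ι ⊔ skewSub ι = ⊤ := by
    rw [eq_top_iff]
    intro M _
    rw [Submodule.mem_sup]
    refine ⟨(2:ℂ)⁻¹ • (M + Mᵀ), by simp [Matrix.transpose_add, add_comm], (2:ℂ)⁻¹ • (M - Mᵀ),
      by simp [Matrix.transpose_sub, smul_sub, neg_sub], ?_⟩
    rw [← smul_add, add_add_sub_cancel, ← two_smul ℂ M, smul_smul]
    norm_num
  have hinf : symSub ι ⊓ skewSub ι = ⊥ := by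
    rw [eq_bot_iff]
    rintro M ⟨h1, h2⟩
    simp only [Set.mem_setOf_eq, mem_symSub, mem_skewSub, SetLike.mem_coe] at h1 h2
    rw [h1] at h2
    have : M = -M := h2
    have h3 : (2:ℂ) • M = 0 := by rw [two_smul]; nth_rewrite 2 [this]; abel
    simpa using smul_eq_zero.mp h3
  have := Submodule.finrank_sup_add_finrank_inf_eq (symSub ι) (skewSub ι)
  rw [hsup, hinf] at this
  simp only [finrank_top, finrank_bot, add_zero] at this
  rw [← this]
  rw [Module.finrank_matrix]
  simp
end SymSkew

section Maps
variable {ι : Type*} [Fintype ι] [DecidableEq ι]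

noncomputable def phiMap (C : Matrix ι ι ℂ) : Matrix ι ι ℂ →ₗ[ℂ] Matrix ι ι ℂ where
  toFun A := C * A + Aᵀ * C
  map_add' A B := by simp [Matrix.mul_add, Matrix.add_mul, Matrix.transpose_add]; abel
  map_smul' c A := by simp [Matrix.mul_smul, Matrix.smul_mul, Matrix.transpose_smul, smul_add]

noncomputable def psiMap (C : Matrix ι ι ℂ) : Matrix ι ι ℂ →ₗ[ℂ] Matrix ι ι ℂ where
  toFun B := B * C
  map_add' A B := by simp [Matrix.add_mul]
  map_smul' c A := by simp [Matrix.smul_mul]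

@[simp] lemma phiMap_apply (C A : Matrix ι ι ℂ) : phiMap C A = C * A + Aᵀ * C := rfl
@[simp] lemma psiMap_apply (C B : Matrix ι ι ℂ) : psiMap C B = B * C := rfl
end Maps

section Blocks
variable {α β : Type*} [Fintype α] [Fintype β] [DecidableEq α] [DecidableEq β]

lemma fromBlocks_eq_zero_iff (a : Matrix α α ℂ) (b : Matrix α β ℂ) (c : Matrix β α ℂ)
    (d : Matrix β β ℂ) : fromBlocks a b c d = 0 ↔ a = 0 ∧ b = 0 ∧ c = 0 ∧ d = 0 := by
  constructor
  · intro h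
    refine ⟨?_, ?_, ?_, ?_⟩
    · have := congrArg Matrix.toBlocks₁₁ h; simpa [Matrix.toBlocks_fromBlocks₁₁, show Matrix.toBlocks₁₁ (0 : Matrix (α ⊕ β) (α ⊕ β) ℂ) = 0 from rfl] using this
    · have := congrArg Matrix.toBlocks₁₂ h; simpa [Matrix.toBlocks_fromBlocks₁₂, show Matrix.toBlocks₁₂ (0 : Matrix (α ⊕ β) (α ⊕ β) ℂ) = 0 from rfl] using this
    · have := congrArg Matrix.toBlocks₂₁ h; simpa [Matrix.toBlocks_fromBlocks₂₁, show Matrix.toBlocks₂₁ (0 : Matrix (α ⊕ β) (α ⊕ β) ℂ) = 0 from rfl] using this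
    · have := congrArg Matrix.toBlocks₂₂ h; simpa [Matrix.toBlocks_fromBlocks₂₂, show Matrix.toBlocks₂₂ (0 : Matrix (α ⊕ β) (α ⊕ β) ℂ) = 0 from rfl] using this
  · rintro ⟨rfl, rfl, rfl, rfl⟩
    simp [Matrix.fromBlocks_zero]

noncomputable def blocksEquiv : Matrix (α ⊕ β) (α ⊕ β) ℂ ≃ₗ[ℂ]
    (Matrix α α ℂ × Matrix α β ℂ) × (Matrix β α ℂ × Matrix β β ℂ) where
  toFun M := ((M.toBlocks₁₁, M.toBlocks₁₂), (M.toBlocks₂₁, M.toBlocks₂₂))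
  map_add' M N := rfl
  map_smul' c M := rfl
  invFun x := fromBlocks x.1.1 x.1.2 x.2.1 x.2.2
  left_inv M := fromBlocks_toBlocks M
  right_inv x := by
    simp [Matrix.toBlocks_fromBlocks₁₁, Matrix.toBlocks_fromBlocks₁₂,
      Matrix.toBlocks_fromBlocks₂₁, Matrix.toBlocks_fromBlocks₂₂]

@[simp] lemma toBlocks₁₁_transpose (M : Matrix (α ⊕ β) (α ⊕ β) ℂ) :
    (Mᵀ).toBlocks₁₁ = (M.toBlocks₁₁)ᵀ := rfl
@[simp] lemma toBlocks₁₂_transpose (M : Matrix (α ⊕ β) (α ⊕ β) ℂ) :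
    (Mᵀ).toBlocks₁₂ = (M.toBlocks₂₁)ᵀ := rfl
@[simp] lemma toBlocks₂₁_transpose (M : Matrix (α ⊕ β) (α ⊕ β) ℂ) :
    (Mᵀ).toBlocks₂₁ = (M.toBlocks₁₂)ᵀ := rfl
@[simp] lemma toBlocks₂₂_transpose (M : Matrix (α ⊕ β) (α ⊕ β) ℂ) :
    (Mᵀ).toBlocks₂₂ = (M.toBlocks₂₂)ᵀ := rfl

@[simp] lemma blocksEquiv_symm_apply (x) :
    (blocksEquiv (α := α) (β := β)).symm x = fromBlocks x.1.1 x.1.2 x.2.1 x.2.2 := rfl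
end Blocks

section Conj
variable {ι κ : Type*} [Fintype ι] [Fintype κ] [DecidableEq ι] [DecidableEq κ]

noncomputable def conjEquiv (L : Matrix κ ι ℂ) (R : Matrix ι κ ℂ) (L' : Matrix ι κ ℂ)
    (R' : Matrix κ ι ℂ) (hL : L' * L = 1) (hL2 : L * L' = 1) (hR : R * R' = 1)
    (hR2 : R' * R = 1) :
    Matrix ι ι ℂ ≃ₗ[ℂ] Matrix κ κ ℂ where
  toFun A := L * A * R
  map_add' A B := by simp [Matrix.mul_add, Matrix.add_mul]
  map_smul' c A := by simp [Matrix.smul_mul, Matrix.mul_smul]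
  invFun M := L' * M * R'
  left_inv A := by
    simp only [← Matrix.mul_assoc]
    rw [hL, Matrix.one_mul, Matrix.mul_assoc, hR, Matrix.mul_one]
  right_inv M := by
    simp only [← Matrix.mul_assoc]
    rw [hL2, Matrix.one_mul, Matrix.mul_assoc, hR2, Matrix.mul_one]

@[simp] lemma conjEquiv_apply (L : Matrix κ ι ℂ) (R : Matrix ι κ ℂ) (L' : Matrix ι κ ℂ)
    (R' : Matrix κ ι ℂ) (hL : L' * L = 1) (hL2 : L * L' = 1) (hR : R * R' = 1)
    (hR2 : R' * R = 1) (A : Matrix ι ι ℂ) :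
    conjEquiv L R L' R' hL hL2 hR hR2 A = L * A * R := rfl

@[simp] lemma conjEquiv_symm_apply (L : Matrix κ ι ℂ) (R : Matrix ι κ ℂ) (L' : Matrix ι κ ℂ)
    (R' : Matrix κ ι ℂ) (hL : L' * L = 1) (hL2 : L * L' = 1) (hR : R * R' = 1)
    (hR2 : R' * R = 1) (M : Matrix κ κ ℂ) :
    (conjEquiv L R L' R' hL hL2 hR hR2).symm M = L' * M * R' := rfl

end Conj

section Cong
variable {ι κ : Type*} [Fintype ι] [Fintype κ] [DecidableEq ι] [DecidableEq κ]
variable (Q : Matrix ι κ ℂ) (Q' : Matrix κ ι ℂ)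

noncomputable def congA (h1 : Q * Q' = 1) (h2 : Q' * Q = 1) :
    Matrix ι ι ℂ ≃ₗ[ℂ] Matrix κ κ ℂ := conjEquiv Q' Q Q Q' h1 h2 h1 h2

noncomputable def congT (h1 : Q * Q' = 1) (h2 : Q' * Q = 1) :
    Matrix ι ι ℂ ≃ₗ[ℂ] Matrix κ κ ℂ :=
  conjEquiv Qᵀ Q Q'ᵀ Q'
    (by rw [← Matrix.transpose_mul, h1, Matrix.transpose_one])
    (by rw [← Matrix.transpose_mul, h2, Matrix.transpose_one]) h1 h2

noncomputable def congB (h1 : Q * Q' = 1) (h2 : Q' * Q = 1) :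
    Matrix ι ι ℂ ≃ₗ[ℂ] Matrix κ κ ℂ :=
  conjEquiv Q' Q'ᵀ Q Qᵀ h1 h2
    (by rw [← Matrix.transpose_mul, h1, Matrix.transpose_one])
    (by rw [← Matrix.transpose_mul, h2, Matrix.transpose_one])

variable (h1 : Q * Q' = 1) (h2 : Q' * Q = 1)

@[simp] lemma congA_apply (A) : congA Q Q' h1 h2 A = Q' * A * Q := rfl
@[simp] lemma congA_symm_apply (M) : (congA Q Q' h1 h2).symm M = Q * M * Q' := rfl
@[simp] lemma congT_apply (A) : congT Q Q' h1 h2 A = Qᵀ * A * Q := rfl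
@[simp] lemma congB_apply (A) : congB Q Q' h1 h2 A = Q' * A * Q'ᵀ := rfl
@[simp] lemma congB_symm_apply (M) : (congB Q Q' h1 h2).symm M = Q * M * Qᵀ := rfl

variable (C : Matrix ι ι ℂ)

lemma phi_conj (M : Matrix κ κ ℂ) :
    phiMap (Qᵀ * C * Q) M = congT Q Q' h1 h2 (phiMap C ((congA Q Q' h1 h2).symm M)) := by
  have e1 : Qᵀ * Q'ᵀ = 1 := by rw [← Matrix.transpose_mul, h2, Matrix.transpose_one]
  simp only [phiMap_apply, congT_apply, congA_symm_apply, Matrix.transpose_mul,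
    Matrix.mul_add, Matrix.add_mul, Matrix.mul_assoc, Matrix.transpose_transpose]
  rw [h2]
  rw [← Matrix.mul_assoc Qᵀ Q'ᵀ, e1]
  simp [Matrix.mul_assoc]

lemma psi_conj (M : Matrix κ κ ℂ) :
    psiMap C ((congB Q Q' h1 h2).symm M) =
      (congA Q Q' h1 h2).symm (psiMap (Qᵀ * C * Q) M) := by
  simp only [psiMap_apply, congB_symm_apply, congA_symm_apply, Matrix.mul_assoc]
  rw [h1]
  simp [Matrix.mul_assoc]

lemma map_congA_ker_phi :
    (LinearMap.ker (phiMap C)).map (congA Q Q' h1 h2 : _ →ₗ[ℂ] _) =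
      LinearMap.ker (phiMap (Qᵀ * C * Q)) := by
  ext M
  rw [Submodule.mem_map_equiv, LinearMap.mem_ker, LinearMap.mem_ker]
  constructor
  · intro h; rw [phi_conj Q Q' h1 h2 C M, h, map_zero]
  · intro h
    have := phi_conj Q Q' h1 h2 C M
    rw [h] at this
    exact ((congT Q Q' h1 h2).map_eq_zero_iff).mp this.symm

lemma map_congB_sym :
    (symSub ι).map (congB Q Q' h1 h2 : _ →ₗ[ℂ] _) = symSub κ := by
  ext M
  rw [Submodule.mem_map_equiv, mem_symSub, mem_symSub]
  have key : ((congB Q Q' h1 h2).symm M)ᵀ = (congB Q Q' h1 h2).symm Mᵀ := by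
    simp [Matrix.transpose_mul, Matrix.mul_assoc]
  constructor
  · intro h
    have : (congB Q Q' h1 h2).symm Mᵀ = (congB Q Q' h1 h2).symm M := by rw [← key, h]
    exact (congB Q Q' h1 h2).symm.injective this
  · intro h; rw [key, h]

lemma map_congB_sym_ker :
    ((symSub ι ⊓ LinearMap.ker (psiMap C)).map (congB Q Q' h1 h2 : _ →ₗ[ℂ] _)) =
      symSub κ ⊓ LinearMap.ker (psiMap (Qᵀ * C * Q)) := by
  ext M
  rw [Submodule.mem_map_equiv]
  simp only [Submodule.mem_inf, mem_symSub, LinearMap.mem_ker]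
  have key : ((congB Q Q' h1 h2).symm M)ᵀ = (congB Q Q' h1 h2).symm Mᵀ := by
    simp [Matrix.transpose_mul, Matrix.mul_assoc]
  constructor
  · rintro ⟨hs, hk⟩
    refine ⟨?_, ?_⟩
    · have : (congB Q Q' h1 h2).symm Mᵀ = (congB Q Q' h1 h2).symm M := by rw [← key, hs]
      exact (congB Q Q' h1 h2).symm.injective this
    · rw [psi_conj Q Q' h1 h2 C M] at hk
      exact ((congA Q Q' h1 h2).symm.map_eq_zero_iff).mp hk
  · rintro ⟨hs, hk⟩
    refine ⟨by rw [key, hs], ?_⟩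
    rw [psi_conj Q Q' h1 h2 C M, hk, map_zero]
end Cong

section BlockDims
variable {α β : Type*} [Fintype α] [Fintype β] [DecidableEq α] [DecidableEq β]
variable (C₁ C₁' : Matrix α α ℂ)

lemma finrank_ker_phi_invertible (hl : C₁ * C₁' = 1) (hr : C₁' * C₁ = 1)
    (hskew : C₁ᵀ = -C₁) :
    finrank ℂ (LinearMap.ker (phiMap C₁)) = finrank ℂ (symSub α) := by
  have hCt : C₁'ᵀ * C₁ = -1 := by
    have h : C₁'ᵀ * C₁ᵀ = 1 := by rw [← Matrix.transpose_mul, hl, Matrix.transpose_one]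
    rw [hskew, Matrix.mul_neg] at h
    exact neg_eq_iff_eq_neg.mp h
  have hmap : (LinearMap.ker (phiMap C₁)).map
      ((conjEquiv C₁ (1 : Matrix α α ℂ) C₁' (1 : Matrix α α ℂ) hr hl (by simp) (by simp)) :
        _ →ₗ[ℂ] _) = symSub α := by
    ext S
    rw [Submodule.mem_map_equiv, LinearMap.mem_ker, mem_symSub, conjEquiv_symm_apply]
    simp only [Matrix.mul_one, phiMap_apply, Matrix.transpose_mul]
    rw [← Matrix.mul_assoc C₁ C₁' S, hl, Matrix.one_mul, Matrix.mul_assoc, hCt]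
    rw [Matrix.mul_neg, Matrix.mul_one, ← sub_eq_add_neg, sub_eq_zero]
    exact eq_comm
  rw [← hmap, LinearEquiv.finrank_map_eq]

lemma phiD_blocks (a : Matrix α α ℂ) (b : Matrix α β ℂ) (c : Matrix β α ℂ) (d : Matrix β β ℂ) :
    phiMap (fromBlocks C₁ 0 0 (0 : Matrix β β ℂ)) (fromBlocks a b c d) =
      fromBlocks (C₁ * a + aᵀ * C₁) (C₁ * b) (bᵀ * C₁) 0 := by
  simp [phiMap_apply, Matrix.fromBlocks_multiply, Matrix.fromBlocks_transpose,
    Matrix.fromBlocks_add]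

lemma finrank_ker_phiD (hl : C₁ * C₁' = 1) (hr : C₁' * C₁ = 1) :
    finrank ℂ (LinearMap.ker (phiMap (fromBlocks C₁ 0 0 (0 : Matrix β β ℂ)))) =
      finrank ℂ (LinearMap.ker (phiMap C₁)) +
        (Fintype.card β * Fintype.card α + Fintype.card β * Fintype.card β) := by
  have hker : LinearMap.ker (phiMap (fromBlocks C₁ 0 0 (0 : Matrix β β ℂ))) =
      Submodule.comap (blocksEquiv (α := α) (β := β)).toLinearMap
        (((LinearMap.ker (phiMap C₁)).prod (⊥ : Submodule ℂ (Matrix α β ℂ))).prod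
          ((⊤ : Submodule ℂ (Matrix β α ℂ)).prod (⊤ : Submodule ℂ (Matrix β β ℂ)))) := by
    ext A
    rw [LinearMap.mem_ker, Submodule.mem_comap]
    have hA : A = fromBlocks A.toBlocks₁₁ A.toBlocks₁₂ A.toBlocks₂₁ A.toBlocks₂₂ :=
      (fromBlocks_toBlocks A).symm
    constructor
    · intro h
      rw [hA, phiD_blocks, fromBlocks_eq_zero_iff] at h
      obtain ⟨h11, h12, -, -⟩ := h
      have hb : A.toBlocks₁₂ = 0 := by
        have := congrArg (fun X => C₁' * X) h12
        simpa [← Matrix.mul_assoc, hr] using this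
      exact ⟨⟨h11, hb⟩, ⟨trivial, trivial⟩⟩
    · rintro ⟨⟨h11, h12⟩, -⟩
      rw [hA, phiD_blocks]
      rw [fromBlocks_eq_zero_iff]
      refine ⟨h11, ?_, ?_, rfl⟩
      · rw [show A.toBlocks₁₂ = 0 from h12]; simp
      · rw [show A.toBlocks₁₂ = 0 from h12]; simp
  rw [hker, finrank_comap_equiv, finrank_prod_sub, finrank_prod_sub, finrank_prod_sub]
  simp [finrank_top, Module.finrank_matrix]

lemma finrank_sym_ker_psiD (hl : C₁ * C₁' = 1) (hr : C₁' * C₁ = 1) :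
    finrank ℂ ((symSub (α ⊕ β) ⊓
        LinearMap.ker (psiMap (fromBlocks C₁ 0 0 (0 : Matrix β β ℂ)))) :
        Submodule ℂ (Matrix (α ⊕ β) (α ⊕ β) ℂ)) = finrank ℂ (symSub β) := by
  have hset : (symSub (α ⊕ β) ⊓ LinearMap.ker (psiMap (fromBlocks C₁ 0 0 (0 : Matrix β β ℂ)))) =
      Submodule.comap (blocksEquiv (α := α) (β := β)).toLinearMap
        (((⊥ : Submodule ℂ (Matrix α α ℂ)).prod (⊥ : Submodule ℂ (Matrix α β ℂ))).prod
          ((⊥ : Submodule ℂ (Matrix β α ℂ)).prod (symSub β))) := by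
    ext B
    rw [Submodule.mem_inf, mem_symSub, LinearMap.mem_ker, Submodule.mem_comap]
    have hB : B = fromBlocks B.toBlocks₁₁ B.toBlocks₁₂ B.toBlocks₂₁ B.toBlocks₂₂ :=
      (fromBlocks_toBlocks B).symm
    constructor
    · rintro ⟨hs, hk⟩
      rw [hB, psiMap_apply, Matrix.fromBlocks_multiply] at hk
      simp only [Matrix.mul_zero, Matrix.zero_mul, add_zero, zero_add] at hk
      rw [fromBlocks_eq_zero_iff] at hk
      obtain ⟨ha, -, hc, -⟩ := hk
      have ha' : B.toBlocks₁₁ = 0 := by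
        have := congrArg (fun X => X * C₁') ha
        simpa [Matrix.mul_assoc, hl] using this
      have hc' : B.toBlocks₂₁ = 0 := by
        have := congrArg (fun X => X * C₁') hc
        simpa [Matrix.mul_assoc, hl] using this
      have h2 : B.toBlocks₁₂ = (B.toBlocks₂₁)ᵀ := by
        have h' := congrArg Matrix.toBlocks₁₂ hs
        rw [toBlocks₁₂_transpose] at h'
        exact h'.symm
      have h4 : (B.toBlocks₂₂)ᵀ = B.toBlocks₂₂ := by
        have h' := congrArg Matrix.toBlocks₂₂ hs
        rwa [toBlocks₂₂_transpose] at h'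
      have hb' : B.toBlocks₁₂ = 0 := by rw [h2, hc']; simp
      exact ⟨⟨ha', hb'⟩, hc', h4⟩
    · rintro ⟨⟨ha0, hb0⟩, hc0, hd⟩
      have ha : B.toBlocks₁₁ = 0 := (Submodule.mem_bot ℂ).mp ha0
      have hb : B.toBlocks₁₂ = 0 := (Submodule.mem_bot ℂ).mp hb0
      have hc : B.toBlocks₂₁ = 0 := (Submodule.mem_bot ℂ).mp hc0
      constructor
      · rw [hB, ha, hb, hc, Matrix.fromBlocks_transpose]
        simp only [Matrix.transpose_zero]
        rw [show (B.toBlocks₂₂)ᵀ = B.toBlocks₂₂ from hd]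
      · rw [hB, ha, hb, hc, psiMap_apply, Matrix.fromBlocks_multiply]
        simp
  rw [hset, finrank_comap_equiv, finrank_prod_sub, finrank_prod_sub, finrank_prod_sub]
  simp

noncomputable def symBuild : (Matrix α α ℂ × Matrix α β ℂ × Matrix β β ℂ) →ₗ[ℂ]
    Matrix (α ⊕ β) (α ⊕ β) ℂ where
  toFun x := fromBlocks x.1 x.2.1 x.2.1ᵀ x.2.2
  map_add' x y := by simp [Matrix.fromBlocks_add, Matrix.transpose_add]
  map_smul' c x := by simp [Matrix.fromBlocks_smul, Matrix.transpose_smul]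

lemma symBuild_inj : Function.Injective (symBuild (α := α) (β := β)) := by
  intro x y h
  simp only [symBuild, LinearMap.coe_mk, AddHom.coe_mk] at h
  change fromBlocks x.1 x.2.1 x.2.1ᵀ x.2.2 = fromBlocks y.1 y.2.1 y.2.1ᵀ y.2.2 at h
  rw [Matrix.fromBlocks_inj] at h
  obtain ⟨h1, h2, -, h4⟩ := h
  exact Prod.ext h1 (Prod.ext h2 h4)

lemma finrank_sym_sum : finrank ℂ (symSub (α ⊕ β)) =
    finrank ℂ (symSub α) + Fintype.card α * Fintype.card β + finrank ℂ (symSub β) := by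
  have hmap : (Submodule.map symBuild
      ((symSub α).prod ((⊤ : Submodule ℂ (Matrix α β ℂ)).prod (symSub β)))) =
      symSub (α ⊕ β) := by
    ext M
    rw [Submodule.mem_map, mem_symSub]
    constructor
    · rintro ⟨⟨P, R, S⟩, ⟨hP, -, hS⟩, rfl⟩
      simp only [symBuild, LinearMap.coe_mk, AddHom.coe_mk]
      change (fromBlocks P R Rᵀ S)ᵀ = fromBlocks P R Rᵀ S
      rw [Matrix.fromBlocks_transpose]
      rw [show Pᵀ = P from hP, show Sᵀ = S from hS, Matrix.transpose_transpose]
    · intro hM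
      refine ⟨(M.toBlocks₁₁, M.toBlocks₁₂, M.toBlocks₂₂), ⟨?_, trivial, ?_⟩, ?_⟩
      · show (M.toBlocks₁₁)ᵀ = M.toBlocks₁₁
        have h' := congrArg Matrix.toBlocks₁₁ hM
        rwa [toBlocks₁₁_transpose] at h'
      · show (M.toBlocks₂₂)ᵀ = M.toBlocks₂₂
        have h' := congrArg Matrix.toBlocks₂₂ hM
        rwa [toBlocks₂₂_transpose] at h'
      · have h21 := congrArg Matrix.toBlocks₂₁ hM
        rw [toBlocks₂₁_transpose] at h21
        simp only [symBuild, LinearMap.coe_mk, AddHom.coe_mk]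
        conv_rhs => rw [← fromBlocks_toBlocks M]
        change fromBlocks M.toBlocks₁₁ M.toBlocks₁₂ M.toBlocks₁₂ᵀ M.toBlocks₂₂ = _
        rw [Matrix.fromBlocks_inj]
        exact ⟨rfl, rfl, h21, rfl⟩
  rw [← hmap, finrank_map_inj _ symBuild_inj, finrank_prod_sub, finrank_prod_sub]
  simp [finrank_top, Module.finrank_matrix]
  ring
end BlockDims

section Construct

lemma exists_congruence (n s : ℕ) (hsn : s ≤ n) (C : Matrix (Fin n) (Fin n) ℂ)
    (hC : Cᵀ = -C) (hrk : C.rank = s) :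
    ∃ (Q : Matrix (Fin n) (Fin s ⊕ Fin (n - s)) ℂ)
      (Q' : Matrix (Fin s ⊕ Fin (n - s)) (Fin n) ℂ)
      (C₁ C₁' : Matrix (Fin s) (Fin s) ℂ),
      Q * Q' = 1 ∧ Q' * Q = 1 ∧ Qᵀ * C * Q = fromBlocks C₁ 0 0 0 ∧
      C₁ * C₁' = 1 ∧ C₁' * C₁ = 1 ∧ C₁ᵀ = -C₁ := by
  classical
  set K := LinearMap.ker C.mulVecLin with hKdef
  have hrange : finrank ℂ (LinearMap.range C.mulVecLin) = s := hrk
  have hrn := LinearMap.finrank_range_add_finrank_ker C.mulVecLin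
  rw [hrange, Module.finrank_pi] at hrn
  have hK : finrank ℂ K = n - s := by
    rw [hKdef]
    simp only [Fintype.card_fin] at hrn
    omega
  obtain ⟨U, hUK⟩ := Submodule.exists_isCompl K
  have hU : finrank ℂ U = s := by
    have := Submodule.finrank_add_eq_of_isCompl hUK.symm
    rw [hK, Module.finrank_pi] at this
    simp at this; omega
  let bU : Basis (Fin s) ℂ U := Module.finBasisOfFinrankEq ℂ U hU
  let bK : Basis (Fin (n - s)) ℂ K := Module.finBasisOfFinrankEq ℂ K hK
  let b : Basis (Fin s ⊕ Fin (n - s)) ℂ (Fin n → ℂ) :=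
    (bU.prod bK).map (Submodule.prodEquivOfIsCompl U K hUK.symm)
  have hbinl : ∀ i, b (Sum.inl i) = (bU i : Fin n → ℂ) := by
    intro i
    simp [b, Basis.map_apply, Basis.prod_apply, Submodule.coe_prodEquivOfIsCompl']
  have hbinr : ∀ j, b (Sum.inr j) = (bK j : Fin n → ℂ) := by
    intro j
    simp [b, Basis.map_apply, Basis.prod_apply, Submodule.coe_prodEquivOfIsCompl']
  have hbKmem : ∀ j, C.mulVec (b (Sum.inr j)) = 0 := by
    intro j
    rw [hbinr]
    have h0 : C.mulVecLin ↑(bK j) = 0 := (bK j).2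
    rw [Matrix.mulVecLin_apply] at h0
    exact h0
  set Q : Matrix (Fin n) (Fin s ⊕ Fin (n - s)) ℂ := (Pi.basisFun ℂ (Fin n)).toMatrix b with hQdef
  set Q' : Matrix (Fin s ⊕ Fin (n - s)) (Fin n) ℂ := b.toMatrix (Pi.basisFun ℂ (Fin n))
    with hQ'def
  have h1 : Q * Q' = 1 := Basis.toMatrix_mul_toMatrix_flip _ _
  have h2 : Q' * Q = 1 := Basis.toMatrix_mul_toMatrix_flip _ _
  have hQ : ∀ i j, Q i j = b j i := by
    intro i j
    rw [hQdef, Basis.toMatrix_apply, Pi.basisFun_repr]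
  set D : Matrix (Fin s ⊕ Fin (n - s)) (Fin s ⊕ Fin (n - s)) ℂ := Qᵀ * C * Q with hDdef
  have hDskew : Dᵀ = -D := by
    rw [hDdef, Matrix.transpose_mul, Matrix.transpose_mul, Matrix.transpose_transpose, hC]
    simp [Matrix.mul_assoc, Matrix.neg_mul, Matrix.mul_neg]
  have hCQ : ∀ i j, (C * Q) i (Sum.inr j) = 0 := by
    intro i j
    have h := congrFun (hbKmem j) i
    rw [Matrix.mul_apply]
    simpa [Matrix.mulVec, dotProduct, hQ] using h
  have hcol : ∀ p j, D p (Sum.inr j) = 0 := by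
    intro p j
    rw [hDdef, Matrix.mul_assoc, Matrix.mul_apply]
    simp [hCQ]
  have hrow : ∀ j p, D (Sum.inr j) p = 0 := by
    intro j p
    have h := congrFun (congrFun hDskew p) (Sum.inr j)
    simp only [Matrix.transpose_apply, Matrix.neg_apply, hcol p j, neg_zero] at h
    exact h
  set C₁ : Matrix (Fin s) (Fin s) ℂ := D.toBlocks₁₁ with hC₁def
  have hD : D = fromBlocks C₁ 0 0 0 := by
    conv_lhs => rw [← fromBlocks_toBlocks D]
    rw [Matrix.fromBlocks_inj]
    refine ⟨rfl, ?_, ?_, ?_⟩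
    · ext i j
      exact hcol (Sum.inl i) j
    · ext i j
      exact hrow i (Sum.inl j)
    · ext i j
      exact hrow i (Sum.inr j)
  have hC₁skew : C₁ᵀ = -C₁ := by
    have h := congrArg Matrix.toBlocks₁₁ hDskew
    rw [toBlocks₁₁_transpose] at h
    rw [h]
    ext i j
    simp only [Matrix.neg_apply, Matrix.toBlocks₁₁, Matrix.of_apply, neg_inj]
    rfl
  -- injectivity of C₁
  have hinj : ∀ x : Fin s → ℂ, C₁.mulVec x = 0 → x = 0 := by
    intro x hx
    set y : Fin s ⊕ Fin (n - s) → ℂ := Sum.elim x 0 with hydef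
    have hDy : D.mulVec y = 0 := by
      rw [hD, hydef, Matrix.fromBlocks_mulVec]
      simp [hx]
    have hQl : ∀ v : (Fin s ⊕ Fin (n - s)) → ℂ, Q.mulVec v = 0 → v = 0 := by
      intro v hv
      have : (Q' * Q).mulVec v = 0 := by
        rw [← Matrix.mulVec_mulVec, hv, Matrix.mulVec_zero]
      rwa [h2, Matrix.one_mulVec] at this
    have hQtl : ∀ v : Fin n → ℂ, Qᵀ.mulVec v = 0 → v = 0 := by
      intro v hv
      have h3 : Q'ᵀ * Qᵀ = 1 := by rw [← Matrix.transpose_mul, h1, Matrix.transpose_one]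
      have : (Q'ᵀ * Qᵀ).mulVec v = 0 := by
        rw [← Matrix.mulVec_mulVec, hv, Matrix.mulVec_zero]
      rwa [h3, Matrix.one_mulVec] at this
    have hCQy : C.mulVec (Q.mulVec y) = 0 := by
      apply hQtl
      rw [Matrix.mulVec_mulVec, Matrix.mulVec_mulVec, ← hDdef] at *
      exact hDy
    have hQyK : Q.mulVec y ∈ K := by
      rw [hKdef, LinearMap.mem_ker]
      simpa [Matrix.mulVecLin_apply] using hCQy
    have hQyU : Q.mulVec y ∈ U := by
      have hfor : Q.mulVec y = ∑ i : Fin s, x i • (bU i : Fin n → ℂ) := by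
        funext p
        rw [Matrix.mulVec, dotProduct]
        rw [Fintype.sum_sum_type]
        simp only [hydef, Sum.elim_inl, Sum.elim_inr, Pi.zero_apply, mul_zero,
          Finset.sum_const_zero, add_zero, hQ]
        rw [Finset.sum_apply]
        refine Finset.sum_congr rfl fun i _ => ?_
        rw [hbinl i]
        simp [mul_comm]
      rw [hfor]
      exact Submodule.sum_mem U fun i _ => Submodule.smul_mem U _ (bU i).2
    have hQy0 : Q.mulVec y = 0 := by
      have := hUK.disjoint.le_bot (Submodule.mem_inf.mpr ⟨hQyK, hQyU⟩)
      simpa using this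
    have hy0 : y = 0 := hQl y hQy0
    funext i
    exact congrFun hy0 (Sum.inl i)
  have hdet : C₁.det ≠ 0 := by
    intro hdet0
    obtain ⟨v, hv0, hv⟩ := (Matrix.exists_mulVec_eq_zero_iff).mpr hdet0
    exact hv0 (hinj v hv)
  have hunit : IsUnit C₁ := (Matrix.isUnit_iff_isUnit_det C₁).mpr (Ne.isUnit hdet)
  obtain ⟨u, hu⟩ := hunit
  refine ⟨Q, Q', C₁, ↑u⁻¹, h1, h2, by rw [← hDdef, hD], ?_, ?_, hC₁skew⟩
  · rw [← hu]
    exact Units.mul_inv u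
  · rw [← hu]
    exact Units.inv_mul u

end Construct

-- ===== original problem definitions =====
/-- The even part `E ≅ gl(n)` of the periplectic Lie superalgebra `p(n)`:
matrices `fromBlocks A 0 0 (-Aᵀ)`. -/
noncomputable def pnEven (n : ℕ) : Submodule ℂ (Matrix (Fin n ⊕ Fin n) (Fin n ⊕ Fin n) ℂ) where
  carrier := {X | ∃ A : Matrix (Fin n) (Fin n) ℂ, X = Matrix.fromBlocks A 0 0 (-Aᵀ)}
  add_mem' := by
    rintro X Y ⟨A, rfl⟩ ⟨A', rfl⟩
    exact ⟨A + A', by simp [Matrix.fromBlocks_add, Matrix.transpose_add, neg_add, add_comm]⟩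
  zero_mem' := ⟨0, by simp⟩
  smul_mem' := by
    rintro c X ⟨A, rfl⟩
    exact ⟨c • A, by simp [Matrix.fromBlocks_smul, Matrix.transpose_smul]⟩

/-- The odd part `O` of the periplectic Lie superalgebra `p(n)`:
matrices `fromBlocks 0 B C' 0` with `Bᵀ = B` and `C'ᵀ = -C'`. -/
noncomputable def pnOdd (n : ℕ) : Submodule ℂ (Matrix (Fin n ⊕ Fin n) (Fin n ⊕ Fin n) ℂ) where
  carrier := {X | ∃ B C' : Matrix (Fin n) (Fin n) ℂ,
    Bᵀ = B ∧ C'ᵀ = -C' ∧ X = Matrix.fromBlocks 0 B C' 0}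
  add_mem' := by
    rintro X Y ⟨B, C', hB, hC, rfl⟩ ⟨B', C'', hB', hC', rfl⟩
    exact ⟨B + B', C' + C'',
      by simp [Matrix.transpose_add, hB, hB'],
      by simp [Matrix.transpose_add, hC, hC']; rw [add_comm],
      by simp [Matrix.fromBlocks_add]⟩
  zero_mem' := ⟨0, 0, by simp, by simp, by simp⟩
  smul_mem' := by
    rintro c X ⟨B, C', hB, hC, rfl⟩
    exact ⟨c • B, c • C',
      by simp [Matrix.transpose_smul, hB],
      by simp [Matrix.transpose_smul, hC],
      by simp [Matrix.fromBlocks_smul]⟩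

/-- The linear map `Y ↦ xY - Yx` on `gl(n|n)` (the super-adjoint action of the
odd element `x` on even elements). -/
noncomputable def adMinus (n : ℕ) (C : Matrix (Fin n) (Fin n) ℂ) :
    Matrix (Fin n ⊕ Fin n) (Fin n ⊕ Fin n) ℂ →ₗ[ℂ] Matrix (Fin n ⊕ Fin n) (Fin n ⊕ Fin n) ℂ :=
  LinearMap.mulLeft ℂ (periplecticX n C) - LinearMap.mulRight ℂ (periplecticX n C)

/-- The linear map `Y ↦ xY + Yx` on `gl(n|n)` (the super-adjoint action of the
odd element `x` on odd elements). -/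
noncomputable def adPlus (n : ℕ) (C : Matrix (Fin n) (Fin n) ℂ) :
    Matrix (Fin n ⊕ Fin n) (Fin n ⊕ Fin n) ℂ →ₗ[ℂ] Matrix (Fin n ⊕ Fin n) (Fin n ⊕ Fin n) ℂ :=
  LinearMap.mulLeft ℂ (periplecticX n C) + LinearMap.mulRight ℂ (periplecticX n C)



section Structural
variable (n : ℕ)

noncomputable def evenMap : Matrix (Fin n) (Fin n) ℂ →ₗ[ℂ]
    Matrix (Fin n ⊕ Fin n) (Fin n ⊕ Fin n) ℂ where
  toFun A := Matrix.fromBlocks A 0 0 (-Aᵀ)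
  map_add' A B := by
    ext i j
    rcases i with i | i <;> rcases j with j | j <;>
      simp [Matrix.transpose_add, neg_add, add_comm]
  map_smul' c A := by
    simp [Matrix.fromBlocks_smul, Matrix.transpose_smul]

noncomputable def oddMap : (Matrix (Fin n) (Fin n) ℂ × Matrix (Fin n) (Fin n) ℂ) →ₗ[ℂ]
    Matrix (Fin n ⊕ Fin n) (Fin n ⊕ Fin n) ℂ where
  toFun x := Matrix.fromBlocks 0 x.1 x.2 0
  map_add' x y := by simp [Matrix.fromBlocks_add]
  map_smul' c x := by simp [Matrix.fromBlocks_smul]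

@[simp] lemma evenMap_apply (A) : evenMap n A = Matrix.fromBlocks A 0 0 (-Aᵀ) := rfl
@[simp] lemma oddMap_apply (x) : oddMap n x = Matrix.fromBlocks 0 x.1 x.2 0 := rfl

lemma evenMap_inj : Function.Injective (evenMap n) := by
  intro A A' h
  have := congrArg Matrix.toBlocks₁₁ h
  simpa [Matrix.toBlocks_fromBlocks₁₁] using this

lemma oddMap_inj : Function.Injective (oddMap n) := by
  intro x y h
  have h1 := congrArg Matrix.toBlocks₁₂ h
  have h2 := congrArg Matrix.toBlocks₂₁ h
  simp only [oddMap_apply, Matrix.toBlocks_fromBlocks₁₂, Matrix.toBlocks_fromBlocks₂₁] at h1 h2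
  exact Prod.ext h1 h2

lemma mem_pnEven {X} : X ∈ pnEven n ↔ ∃ A, X = evenMap n A := Iff.rfl

lemma mem_pnOdd {X} : X ∈ pnOdd n ↔
    ∃ B C', Bᵀ = B ∧ C'ᵀ = -C' ∧ X = oddMap n (B, C') := Iff.rfl

variable (C : Matrix (Fin n) (Fin n) ℂ)

lemma adMinus_apply (Y) : adMinus n C Y = periplecticX n C * Y - Y * periplecticX n C := by
  simp [adMinus, LinearMap.sub_apply, LinearMap.mulLeft_apply, LinearMap.mulRight_apply]

lemma adPlus_apply (Y) : adPlus n C Y = periplecticX n C * Y + Y * periplecticX n C := by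
  simp [adPlus, LinearMap.add_apply, LinearMap.mulLeft_apply, LinearMap.mulRight_apply]

lemma adMinus_even (A : Matrix (Fin n) (Fin n) ℂ) :
    adMinus n C (evenMap n A) = oddMap n (0, C * A + Aᵀ * C) := by
  rw [adMinus_apply]
  simp only [evenMap_apply, oddMap_apply, periplecticX, Matrix.fromBlocks_multiply,
    Matrix.zero_mul, Matrix.mul_zero, add_zero, zero_add, Matrix.mul_neg, Matrix.neg_mul]
  ext i j
  rcases i with i | i <;> rcases j with j | j <;>
    simp [Matrix.sub_apply, sub_neg_eq_add]

lemma adPlus_odd (B C' : Matrix (Fin n) (Fin n) ℂ) (hC : Cᵀ = -C) (hB : Bᵀ = B) :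
    adPlus n C (oddMap n (B, C')) = evenMap n (B * C) := by
  rw [adPlus_apply]
  simp only [evenMap_apply, oddMap_apply, periplecticX, Matrix.fromBlocks_multiply]
  have hneg : -(Cᵀ * Bᵀ) = C * B := by
    rw [hC, hB, Matrix.neg_mul, neg_neg]
  ext i j
  rcases i with i | i <;> rcases j with j | j <;>
    simp [Matrix.add_apply, hneg]
end Structural

section Ident
variable (n : ℕ) (C : Matrix (Fin n) (Fin n) ℂ)

lemma Seven_eq : pnEven n ⊓ LinearMap.ker (adMinus n C) =
    (LinearMap.ker (phiMap C)).map (evenMap n) := by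
  ext X
  simp only [Submodule.mem_inf, Submodule.mem_map, LinearMap.mem_ker]
  constructor
  · rintro ⟨⟨A, rfl⟩, hk⟩
    rw [show Matrix.fromBlocks A 0 0 (-Aᵀ) = evenMap n A from rfl, adMinus_even] at hk
    have h0 : C * A + Aᵀ * C = 0 := by
      have := congrArg Matrix.toBlocks₂₁ hk
      simpa [Matrix.toBlocks_fromBlocks₂₁, show Matrix.toBlocks₂₁ (0 : Matrix (Fin n ⊕ Fin n) (Fin n ⊕ Fin n) ℂ) = 0 from rfl] using this
    exact ⟨A, h0, rfl⟩
  · rintro ⟨A, hA, rfl⟩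
    refine ⟨⟨A, rfl⟩, ?_⟩
    rw [adMinus_even, show C * A + Aᵀ * C = 0 from hA]
    simp

lemma Teven_eq (hC : Cᵀ = -C) : Submodule.map (adPlus n C) (pnOdd n) =
    ((symSub (Fin n)).map (psiMap C)).map (evenMap n) := by
  ext X
  simp only [Submodule.mem_map]
  constructor
  · rintro ⟨Y, ⟨B, C', hB, hC', rfl⟩, rfl⟩
    rw [show Matrix.fromBlocks 0 B C' 0 = oddMap n (B, C') from rfl,
      adPlus_odd n C B C' hC hB]
    exact ⟨B * C, ⟨B, hB, rfl⟩, rfl⟩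
  · rintro ⟨W, ⟨B, hB, rfl⟩, rfl⟩
    refine ⟨oddMap n (B, 0), ⟨B, 0, hB, by simp, rfl⟩, ?_⟩
    rw [adPlus_odd n C B 0 hC hB]
    rfl

lemma Sodd_eq (hC : Cᵀ = -C) : pnOdd n ⊓ LinearMap.ker (adPlus n C) =
    ((symSub (Fin n) ⊓ LinearMap.ker (psiMap C)).prod (skewSub (Fin n))).map (oddMap n) := by
  ext X
  simp only [Submodule.mem_inf, Submodule.mem_map, LinearMap.mem_ker, Submodule.mem_prod]
  constructor
  · rintro ⟨⟨B, C', hB, hC', rfl⟩, hk⟩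
    rw [show Matrix.fromBlocks 0 B C' 0 = oddMap n (B, C') from rfl,
      adPlus_odd n C B C' hC hB] at hk
    have h0 : B * C = 0 := by
      have := congrArg Matrix.toBlocks₁₁ hk
      simpa [Matrix.toBlocks_fromBlocks₁₁, show Matrix.toBlocks₁₁ (0 : Matrix (Fin n ⊕ Fin n) (Fin n ⊕ Fin n) ℂ) = 0 from rfl] using this
    exact ⟨(B, C'), ⟨⟨hB, h0⟩, hC'⟩, rfl⟩
  · rintro ⟨⟨B, C'⟩, ⟨⟨hB, hBC⟩, hC'⟩, rfl⟩
    refine ⟨⟨B, C', hB, hC', rfl⟩, ?_⟩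
    rw [adPlus_odd n C B C' hC hB, show B * C = 0 from hBC]
    simp

lemma Todd_eq : Submodule.map (adMinus n C) (pnEven n) =
    ((⊥ : Submodule ℂ (Matrix (Fin n) (Fin n) ℂ)).prod
      (LinearMap.range (phiMap C))).map (oddMap n) := by
  ext X
  simp only [Submodule.mem_map, Submodule.mem_prod, Submodule.mem_bot, LinearMap.mem_range]
  constructor
  · rintro ⟨Y, ⟨A, rfl⟩, rfl⟩
    rw [show Matrix.fromBlocks A 0 0 (-Aᵀ) = evenMap n A from rfl, adMinus_even]
    exact ⟨(0, C * A + Aᵀ * C), ⟨rfl, ⟨A, rfl⟩⟩, rfl⟩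
  · rintro ⟨⟨z, w⟩, ⟨rfl, ⟨A, rfl⟩⟩, rfl⟩
    refine ⟨evenMap n A, ⟨A, rfl⟩, ?_⟩
    rw [adMinus_even]
    rfl
end Ident
/-- For `C` antisymmetric of rank `s ≤ n` and `x = fromBlocks 0 0 C 0`:
(1) `xY - Yx ∈ O` for `Y ∈ E`, so the super-adjoint action defines `d₁ : E → O`;
(2) `xY + Yx ∈ E` for `Y ∈ O`, defining `d₀ : O → E`;
(3) `d₀ ∘ d₁ = 0` and `d₁ ∘ d₀ = 0`;
(4) `dim (ker d₁ / im d₀) = dim (ker d₀ / im d₁) = (n-s)²`, i.e. `DS_x(p(n))` has the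
same even and odd dimensions as `p(n-s)`.  Here `ker d₁ = E ⊓ ker (Y ↦ xY - Yx)`,
`im d₀ = (Y ↦ xY + Yx) '' O`, and symmetrically for the other pair. -/
theorem DS_adjoint_representation (n s : ℕ) (hn : 1 ≤ n) (hsn : s ≤ n)
    (C : Matrix (Fin n) (Fin n) ℂ) (hC : Cᵀ = -C) (hrk : C.rank = s) :
    (∀ Y ∈ pnEven n, adMinus n C Y ∈ pnOdd n) ∧
    (∀ Y ∈ pnOdd n, adPlus n C Y ∈ pnEven n) ∧
    (∀ Y ∈ pnEven n, adPlus n C (adMinus n C Y) = 0) ∧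
    (∀ Y ∈ pnOdd n, adMinus n C (adPlus n C Y) = 0) ∧
    finrank ℂ
      (((pnEven n ⊓ LinearMap.ker (adMinus n C) :
          Submodule ℂ (Matrix (Fin n ⊕ Fin n) (Fin n ⊕ Fin n) ℂ))) ⧸
        (Submodule.map (adPlus n C) (pnOdd n)).comap
          (pnEven n ⊓ LinearMap.ker (adMinus n C)).subtype)
      = (n - s) ^ 2 ∧
    finrank ℂ
      (((pnOdd n ⊓ LinearMap.ker (adPlus n C) :
          Submodule ℂ (Matrix (Fin n ⊕ Fin n) (Fin n ⊕ Fin n) ℂ))) ⧸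
        (Submodule.map (adMinus n C) (pnEven n)).comap
          (pnOdd n ⊓ LinearMap.ker (adPlus n C)).subtype)
      = (n - s) ^ 2 := by
  have part1 : ∀ Y ∈ pnEven n, adMinus n C Y ∈ pnOdd n := by
    rintro Y ⟨A, rfl⟩
    rw [show Matrix.fromBlocks A 0 0 (-Aᵀ) = evenMap n A from rfl, adMinus_even]
    refine ⟨0, C * A + Aᵀ * C, by simp, ?_, rfl⟩
    rw [Matrix.transpose_add, Matrix.transpose_mul, Matrix.transpose_mul,
      Matrix.transpose_transpose, hC]
    rw [Matrix.mul_neg, Matrix.neg_mul, neg_add, add_comm]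
  have part2 : ∀ Y ∈ pnOdd n, adPlus n C Y ∈ pnEven n := by
    rintro Y ⟨B, C', hB, hC', rfl⟩
    rw [show Matrix.fromBlocks 0 B C' 0 = oddMap n (B, C') from rfl,
      adPlus_odd n C B C' hC hB]
    exact ⟨B * C, rfl⟩
  have part3 : ∀ Y ∈ pnEven n, adPlus n C (adMinus n C Y) = 0 := by
    rintro Y ⟨A, rfl⟩
    rw [show Matrix.fromBlocks A 0 0 (-Aᵀ) = evenMap n A from rfl, adMinus_even,
      adPlus_apply]
    simp only [oddMap_apply, periplecticX, Matrix.fromBlocks_multiply]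
    simp
  have part4 : ∀ Y ∈ pnOdd n, adMinus n C (adPlus n C Y) = 0 := by
    rintro Y ⟨B, C', hB, hC', rfl⟩
    rw [show Matrix.fromBlocks 0 B C' 0 = oddMap n (B, C') from rfl,
      adPlus_odd n C B C' hC hB, adMinus_even]
    have h0 : C * (B * C) + (B * C)ᵀ * C = 0 := by
      rw [Matrix.transpose_mul, hC, hB, Matrix.neg_mul, Matrix.neg_mul, ← Matrix.mul_assoc]
      simp
    rw [h0]
    simp
  obtain ⟨Q, Q', C₁, C₁', h1, h2, hD, hc1, hc2, hskew⟩ := exists_congruence n s hsn C hC hrk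
  -- dimension bookkeeping
  have f1 : finrank ℂ (LinearMap.ker (phiMap C)) =
      finrank ℂ (symSub (Fin s)) + ((n - s) * s + (n - s) * (n - s)) := by
    have hmap := map_congA_ker_phi Q Q' h1 h2 C
    have hfr := LinearEquiv.finrank_map_eq (congA Q Q' h1 h2) (LinearMap.ker (phiMap C))
    rw [hmap, hD] at hfr
    rw [← hfr, finrank_ker_phiD C₁ C₁' hc1 hc2, finrank_ker_phi_invertible C₁ C₁' hc1 hc2 hskew]
    simp [Fintype.card_fin]
  have f2 : finrank ℂ ((symSub (Fin n) ⊓ LinearMap.ker (psiMap C)) :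
      Submodule ℂ (Matrix (Fin n) (Fin n) ℂ)) = finrank ℂ (symSub (Fin (n - s))) := by
    have hmap := map_congB_sym_ker Q Q' h1 h2 C
    have hfr := LinearEquiv.finrank_map_eq (congB Q Q' h1 h2)
      (symSub (Fin n) ⊓ LinearMap.ker (psiMap C))
    rw [hmap, hD] at hfr
    rw [← hfr, finrank_sym_ker_psiD C₁ C₁' hc1 hc2]
  have f3 : finrank ℂ (symSub (Fin n)) = finrank ℂ (symSub (Fin s)) + s * (n - s) +
      finrank ℂ (symSub (Fin (n - s))) := by
    have hmap := map_congB_sym Q Q' h1 h2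
    have hfr := LinearEquiv.finrank_map_eq (congB Q Q' h1 h2) (symSub (Fin n))
    rw [hmap] at hfr
    rw [← hfr, finrank_sym_sum]
    simp [Fintype.card_fin]
  have f4 : finrank ℂ (symSub (Fin n)) + finrank ℂ (skewSub (Fin n)) = n * n := by
    rw [sym_skew_finrank]
    simp [Fintype.card_fin]
  have f5 : finrank ℂ ((symSub (Fin n)).map (psiMap C)) +
      finrank ℂ ((symSub (Fin n) ⊓ LinearMap.ker (psiMap C)) :
        Submodule ℂ (Matrix (Fin n) (Fin n) ℂ)) = finrank ℂ (symSub (Fin n)) :=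
    finrank_map_add_inf_ker (psiMap C) (symSub (Fin n))
  have f6 : finrank ℂ (LinearMap.range (phiMap C)) + finrank ℂ (LinearMap.ker (phiMap C)) =
      n * n := by
    rw [LinearMap.finrank_range_add_finrank_ker (phiMap C), Module.finrank_matrix]
    simp [Fintype.card_fin]
  -- quotient dimensions
  have hTSe : Submodule.map (adPlus n C) (pnOdd n) ≤ pnEven n ⊓ LinearMap.ker (adMinus n C) := by
    rintro X ⟨Y, hY, rfl⟩
    exact ⟨part2 Y hY, LinearMap.mem_ker.mpr (part4 Y hY)⟩
  have hTSo : Submodule.map (adMinus n C) (pnEven n) ≤ pnOdd n ⊓ LinearMap.ker (adPlus n C) := by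
    rintro X ⟨Y, hY, rfl⟩
    exact ⟨part1 Y hY, LinearMap.mem_ker.mpr (part3 Y hY)⟩
  have hq1 := finrank_quot_helper _ _ hTSe
  have hq2 := finrank_quot_helper _ _ hTSo
  have hSe : finrank ℂ ((pnEven n ⊓ LinearMap.ker (adMinus n C)) :
      Submodule ℂ (Matrix (Fin n ⊕ Fin n) (Fin n ⊕ Fin n) ℂ)) =
      finrank ℂ (LinearMap.ker (phiMap C)) := by
    rw [Seven_eq, finrank_map_inj _ (evenMap_inj n)]
  have hTe : finrank ℂ (Submodule.map (adPlus n C) (pnOdd n)) =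
      finrank ℂ ((symSub (Fin n)).map (psiMap C)) := by
    rw [Teven_eq n C hC, finrank_map_inj _ (evenMap_inj n)]
  have hSo : finrank ℂ ((pnOdd n ⊓ LinearMap.ker (adPlus n C)) :
      Submodule ℂ (Matrix (Fin n ⊕ Fin n) (Fin n ⊕ Fin n) ℂ)) =
      finrank ℂ ((symSub (Fin n) ⊓ LinearMap.ker (psiMap C)) :
        Submodule ℂ (Matrix (Fin n) (Fin n) ℂ)) + finrank ℂ (skewSub (Fin n)) := by
    rw [Sodd_eq n C hC, finrank_map_inj _ (oddMap_inj n), finrank_prod_sub]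
  have hTo : finrank ℂ (Submodule.map (adMinus n C) (pnEven n)) =
      finrank ℂ (LinearMap.range (phiMap C)) := by
    rw [Todd_eq, finrank_map_inj _ (oddMap_inj n), finrank_prod_sub, finrank_bot, zero_add]
  have hcomm : (n - s) * s = s * (n - s) := Nat.mul_comm _ _
  have hpow : (n - s) ^ 2 = (n - s) * (n - s) := sq (n - s)
  refine ⟨part1, part2, part3, part4, ?_, ?_⟩
  · rw [hpow]
    omega
  · rw [hpow]
    omega
end
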